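/- arXiv:1206.4004 — 9 statements merged into one kernel-verified Lean document; each statement's English description precedes it below -/
import Mathlib

section
/- The rational Bernstein operator reproduces the identity function: ∑_{k=0}^{n} x_k (γ_k + γ_{k-1}) x^k (1-x)^{n-k} = x·Q(x) for all x, where x_k = γ_{k-1}/(γ_{k-1}+γ_k) for 1 ≤ k ≤ n (with γ_n = 0 giving x_n = 1) and x_0 = 0. -/
/-- The rational Bernstein operator reproduces the identity:
`∑_{k=0}^{n} ξ k * (γ k + γ (k-1)) * x^k (1-x)^(n-k) = x * Q x` for all `x`. -/
theorem stmt5 (n : ℕ) (hn : 1 ≤ n) (γ : ℤ → ℝ)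
    (hneg : γ (-1) = 0) (htop : γ (n : ℤ) = 0)
    (hpos : ∀ k : ℕ, k ≤ n - 1 → 0 < γ (k : ℤ))
    (ξ : ℕ → ℝ) (hξ0 : ξ 0 = 0)
    (hξ : ∀ k : ℕ, 1 ≤ k → k ≤ n → ξ k = γ ((k : ℤ) - 1) / (γ ((k : ℤ) - 1) + γ (k : ℤ)))
    (Q : ℝ → ℝ)
    (hQ : ∀ x : ℝ, Q x = ∑ k ∈ Finset.range n, γ (k : ℤ) * x ^ k * (1 - x) ^ (n - 1 - k)) :
    ∀ x : ℝ, ∑ k ∈ Finset.range (n + 1),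
        ξ k * (γ (k : ℤ) + γ ((k : ℤ) - 1)) * x ^ k * (1 - x) ^ (n - k) = x * Q x := by
  intro x
  rw [hQ, Finset.mul_sum, Finset.sum_range_succ']
  simp only [hξ0, zero_mul]
  rw [add_zero]
  apply Finset.sum_congr rfl
  intro k hk
  rw [Finset.mem_range] at hk
  have h1 : ξ (k + 1) = γ (k : ℤ) / (γ (k : ℤ) + γ ((k : ℤ) + 1)) := by
    rw [hξ (k + 1) (by omega) (by omega)]
    push_cast
    ring_nf
  have hk1 : k ≤ n - 1 := by omega
  have hγk : 0 < γ (k : ℤ) := hpos k hk1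
  have hγk1 : 0 ≤ γ ((k : ℤ) + 1) := by
    rcases lt_or_eq_of_le (Nat.succ_le_of_lt hk) with h | h
    · have := hpos (k + 1) (by omega)
      push_cast at this
      linarith
    · have : ((k : ℤ) + 1) = (n : ℤ) := by omega
      rw [this, htop]
  have hden : γ (k : ℤ) + γ ((k : ℤ) + 1) ≠ 0 := by positivity
  have h2 : γ (((k : ℕ) + 1 : ℕ) : ℤ) = γ ((k : ℤ) + 1) := by push_cast; ring_nf
  rw [h1, h2]
  norm_num
  have hexp : n - (k + 1) = n - 1 - k := by omega
  rw [hexp]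
  field_simp
  ring
end

section
/- For every s ≥ 1 and all x ∈ [0,1], Q(x)·(R_n(e_s)(x) − x^s) = x(1−x) ∑_{l=0}^{s−2} x^l ∑_{k=0}^{n−1} γ_k (x_{k+1}^{s−1−l} − x_k^{s−1−l}) x^k (1−x)^{n−1−k}. -/
/-- For every `s ≥ 1` and all `x ∈ [0,1]`,
`Q x * (R_n (e_s) x - x^s)
  = x (1-x) ∑_{l=0}^{s-2} x^l ∑_{k=0}^{n-1} γ k (ξ (k+1)^(s-1-l) - ξ k^(s-1-l)) x^k (1-x)^(n-1-k)`. -/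
theorem stmt6 (n : ℕ) (hn : 1 ≤ n) (γ : ℤ → ℝ)
    (hneg : γ (-1) = 0) (htop : γ (n : ℤ) = 0)
    (hpos : ∀ k : ℕ, k ≤ n - 1 → 0 < γ (k : ℤ))
    (ξ : ℕ → ℝ) (hξ0 : ξ 0 = 0)
    (hξ : ∀ k : ℕ, 1 ≤ k → k ≤ n → ξ k = γ ((k : ℤ) - 1) / (γ ((k : ℤ) - 1) + γ (k : ℤ)))
    (Q : ℝ → ℝ)
    (hQ : ∀ x : ℝ, Q x = ∑ k ∈ Finset.range n, γ (k : ℤ) * x ^ k * (1 - x) ^ (n - 1 - k))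
    (R : (ℝ → ℝ) → ℝ → ℝ)
    (hR : ∀ f : ℝ → ℝ, ∀ x : ℝ, R f x =
      (∑ k ∈ Finset.range (n + 1), f (ξ k) * (γ (k : ℤ) + γ ((k : ℤ) - 1)) * x ^ k * (1 - x) ^ (n - k)) / Q x) :
    ∀ s : ℕ, 1 ≤ s → ∀ x ∈ Set.Icc (0 : ℝ) 1,
      Q x * (R (fun t => t ^ s) x - x ^ s)
        = x * (1 - x) * ∑ l ∈ Finset.range (s - 1), x ^ l *
            ∑ k ∈ Finset.range n,
              γ (k : ℤ) * (ξ (k + 1) ^ (s - 1 - l) - ξ k ^ (s - 1 - l)) * x ^ k * (1 - x) ^ (n - 1 - k) := by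
  intro s hs x hx
  obtain ⟨hx0, hx1⟩ := hx
  -- nonnegativity of γ on 0..n
  have hγnn : ∀ k : ℕ, k ≤ n → 0 ≤ γ (k : ℤ) := by
    intro k hk
    rcases Nat.lt_or_ge k n with h | h
    · exact le_of_lt (hpos k (by omega))
    · have hkn : k = n := by omega
      rw [hkn, htop]
  -- node relation
  have hnode : ∀ k : ℕ, k < n → ξ (k + 1) * (γ (k : ℤ) + γ ((k : ℤ) + 1)) = γ (k : ℤ) := by
    intro k hk
    have h1 : ((k + 1 : ℕ) : ℤ) - 1 = (k : ℤ) := by push_cast; ring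
    have h2 : ((k + 1 : ℕ) : ℤ) = (k : ℤ) + 1 := by push_cast; ring
    have hξk := hξ (k + 1) (by omega) (by omega)
    rw [h1, h2] at hξk
    have h3 : 0 < γ (k : ℤ) := hpos k (by omega)
    have h4 : 0 ≤ γ ((k : ℤ) + 1) := h2 ▸ hγnn (k + 1) (by omega)
    have hd : γ (k : ℤ) + γ ((k : ℤ) + 1) ≠ 0 := by positivity
    rw [hξk, div_mul_cancel₀ _ hd]
  -- positivity of Q x
  have hQpos : 0 < Q x := by
    rw [hQ]
    rcases eq_or_lt_of_le hx1 with h1 | h1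
    · -- x = 1
      apply Finset.sum_pos'
      · intro k hk
        have hg := hγnn k (by simp at hk; omega)
        have hx' : (0:ℝ) ≤ x ^ k := by rw [h1]; norm_num
        have hx'' : (0:ℝ) ≤ (1 - x) ^ (n - 1 - k) := by
          rw [h1]; exact pow_nonneg (by norm_num) _
        exact mul_nonneg (mul_nonneg hg hx') hx''
      · refine ⟨n - 1, Finset.mem_range.mpr (by omega), ?_⟩
        have he : n - 1 - (n - 1) = 0 := by omega
        rw [he, h1]
        simp only [pow_zero, mul_one, one_pow]
        exact hpos (n - 1) le_rfl
    · apply Finset.sum_pos'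
      · intro k hk
        have hg := hγnn k (by simp at hk; omega)
        have h2 : (0:ℝ) ≤ 1 - x := by linarith
        positivity
      · refine ⟨0, Finset.mem_range.mpr (by omega), ?_⟩
        have hg := hpos 0 (by omega)
        have h2 : (0:ℝ) < 1 - x := by linarith
        simp only [pow_zero, mul_one, one_mul, Nat.sub_zero, Nat.cast_zero]
        positivity
  -- the split identity
  have hsplit : ∀ m : ℕ,
      (∑ k ∈ Finset.range (n + 1), ξ k ^ m * (γ (k : ℤ) + γ ((k : ℤ) - 1)) * x ^ k * (1 - x) ^ (n - k))
        = x * (∑ k ∈ Finset.range n, γ (k : ℤ) * ξ (k + 1) ^ m * x ^ k * (1 - x) ^ (n - 1 - k))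
          + (1 - x) * (∑ k ∈ Finset.range n, γ (k : ℤ) * ξ k ^ m * x ^ k * (1 - x) ^ (n - 1 - k)) := by
    intro m
    have e1 : ∀ k ∈ Finset.range (n + 1),
        ξ k ^ m * (γ (k : ℤ) + γ ((k : ℤ) - 1)) * x ^ k * (1 - x) ^ (n - k)
          = ξ k ^ m * γ (k : ℤ) * x ^ k * (1 - x) ^ (n - k)
            + ξ k ^ m * γ ((k : ℤ) - 1) * x ^ k * (1 - x) ^ (n - k) := by
      intro k _; ring
    rw [Finset.sum_congr rfl e1, Finset.sum_add_distrib]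
    rw [add_comm (x * _)]
    congr 1
    · -- γ_k part: last term vanishes
      rw [Finset.sum_range_succ, htop]
      rw [Finset.mul_sum]
      simp only [mul_zero, zero_mul, add_zero]
      apply Finset.sum_congr rfl
      intro k hk
      have hk' : k < n := Finset.mem_range.mp hk
      have he : n - k = (n - 1 - k) + 1 := by omega
      rw [he, pow_succ]
      ring
    · -- γ_{k-1} part: first term vanishes
      rw [Finset.sum_range_succ']
      have h0 : ξ 0 ^ m * γ (((0:ℕ) : ℤ) - 1) * x ^ 0 * (1 - x) ^ (n - 0) = 0 := by
        norm_num [hneg]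
      rw [h0, add_zero, Finset.mul_sum]
      apply Finset.sum_congr rfl
      intro k hk
      have hk' : k < n := Finset.mem_range.mp hk
      have h1 : ((k + 1 : ℕ) : ℤ) - 1 = (k : ℤ) := by push_cast; ring
      have he : n - (k + 1) = n - 1 - k := by omega
      rw [h1, he, pow_succ]
      ring
  -- step identity : S (m+1) = x * U m
  have hstep : ∀ m : ℕ,
      (∑ k ∈ Finset.range (n + 1), ξ k ^ (m + 1) * (γ (k : ℤ) + γ ((k : ℤ) - 1)) * x ^ k * (1 - x) ^ (n - k))
        = x * (∑ k ∈ Finset.range n, γ (k : ℤ) * ξ (k + 1) ^ m * x ^ k * (1 - x) ^ (n - 1 - k)) := by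
    intro m
    rw [Finset.sum_range_succ']
    have h0 : ξ 0 ^ (m + 1) * (γ ((0:ℕ) : ℤ) + γ (((0:ℕ) : ℤ) - 1)) * x ^ 0 * (1 - x) ^ (n - 0) = 0 := by
      rw [hξ0]; norm_num
    rw [h0, add_zero, Finset.mul_sum]
    apply Finset.sum_congr rfl
    intro k hk
    have hk' : k < n := Finset.mem_range.mp hk
    have h1 : ((k + 1 : ℕ) : ℤ) - 1 = (k : ℤ) := by push_cast; ring
    have h2 : ((k + 1 : ℕ) : ℤ) = (k : ℤ) + 1 := by push_cast; ring
    have he : n - (k + 1) = n - 1 - k := by omega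
    rw [h1, h2, he]
    have hnd := hnode k hk'
    calc ξ (k + 1) ^ (m + 1) * (γ ((k:ℤ) + 1) + γ (k : ℤ)) * x ^ (k + 1) * (1 - x) ^ (n - 1 - k)
        = (ξ (k + 1) * (γ (k : ℤ) + γ ((k:ℤ) + 1))) * ξ (k + 1) ^ m * x ^ (k + 1) * (1 - x) ^ (n - 1 - k) := by
          rw [pow_succ]; ring
      _ = γ (k : ℤ) * ξ (k + 1) ^ m * x ^ (k + 1) * (1 - x) ^ (n - 1 - k) := by rw [hnd]
      _ = x * (γ (k : ℤ) * ξ (k + 1) ^ m * x ^ k * (1 - x) ^ (n - 1 - k)) := by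
          rw [pow_succ]; ring
  -- key telescoping identity
  have key : ∀ m : ℕ,
      (∑ k ∈ Finset.range n, γ (k : ℤ) * ξ (k + 1) ^ m * x ^ k * (1 - x) ^ (n - 1 - k)) - x ^ m * Q x
        = (1 - x) * ∑ l ∈ Finset.range m, x ^ l *
            ∑ k ∈ Finset.range n,
              γ (k : ℤ) * (ξ (k + 1) ^ (m - l) - ξ k ^ (m - l)) * x ^ k * (1 - x) ^ (n - 1 - k) := by
    intro m
    induction m with
    | zero =>
        simp only [pow_zero, one_mul, Finset.range_zero, Finset.sum_empty, mul_zero]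
        rw [hQ]
        rw [sub_eq_zero]
        apply Finset.sum_congr rfl
        intro k _; ring
    | succ m ih =>
        have hUV := hsplit (m + 1)
        have hS := hstep m
        have hT : (∑ k ∈ Finset.range n, γ (k : ℤ) * ξ (k + 1) ^ (m + 1) * x ^ k * (1 - x) ^ (n - 1 - k))
            - (∑ k ∈ Finset.range n, γ (k : ℤ) * ξ k ^ (m + 1) * x ^ k * (1 - x) ^ (n - 1 - k))
            = ∑ k ∈ Finset.range n,
                γ (k : ℤ) * (ξ (k + 1) ^ (m + 1) - ξ k ^ (m + 1)) * x ^ k * (1 - x) ^ (n - 1 - k) := by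
          rw [← Finset.sum_sub_distrib]
          apply Finset.sum_congr rfl
          intro k _; ring
        -- U(m+1) - x^{m+1} Q = (1-x) T(m+1) + x (U m - x^m Q)
        have hrec : (∑ k ∈ Finset.range n, γ (k : ℤ) * ξ (k + 1) ^ (m + 1) * x ^ k * (1 - x) ^ (n - 1 - k))
            - x ^ (m + 1) * Q x
            = (1 - x) * (∑ k ∈ Finset.range n,
                γ (k : ℤ) * (ξ (k + 1) ^ (m + 1) - ξ k ^ (m + 1)) * x ^ k * (1 - x) ^ (n - 1 - k))
              + x * ((∑ k ∈ Finset.range n, γ (k : ℤ) * ξ (k + 1) ^ m * x ^ k * (1 - x) ^ (n - 1 - k))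
                - x ^ m * Q x) := by
          rw [← hT]
          have hxU : x * (∑ k ∈ Finset.range n, γ (k : ℤ) * ξ (k + 1) ^ (m + 1) * x ^ k * (1 - x) ^ (n - 1 - k))
              + (1 - x) * (∑ k ∈ Finset.range n, γ (k : ℤ) * ξ k ^ (m + 1) * x ^ k * (1 - x) ^ (n - 1 - k))
              = x * (∑ k ∈ Finset.range n, γ (k : ℤ) * ξ (k + 1) ^ m * x ^ k * (1 - x) ^ (n - 1 - k)) := by
            rw [← hUV, hS]
          have hpow : x ^ (m + 1) = x * x ^ m := by rw [pow_succ]; ring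
          rw [hpow]
          nlinarith [hxU]
        rw [hrec, ih]
        rw [Finset.sum_range_succ']
        have he0 : x ^ 0 * ∑ k ∈ Finset.range n,
            γ (k : ℤ) * (ξ (k + 1) ^ (m + 1 - 0) - ξ k ^ (m + 1 - 0)) * x ^ k * (1 - x) ^ (n - 1 - k)
            = ∑ k ∈ Finset.range n,
            γ (k : ℤ) * (ξ (k + 1) ^ (m + 1) - ξ k ^ (m + 1)) * x ^ k * (1 - x) ^ (n - 1 - k) := by
          norm_num
        rw [he0]
        have he1 : ∀ l ∈ Finset.range m,
            x ^ (l + 1) * ∑ k ∈ Finset.range n,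
              γ (k : ℤ) * (ξ (k + 1) ^ (m + 1 - (l + 1)) - ξ k ^ (m + 1 - (l + 1))) * x ^ k * (1 - x) ^ (n - 1 - k)
            = x * (x ^ l * ∑ k ∈ Finset.range n,
              γ (k : ℤ) * (ξ (k + 1) ^ (m - l) - ξ k ^ (m - l)) * x ^ k * (1 - x) ^ (n - 1 - k)) := by
          intro l hl
          have : m + 1 - (l + 1) = m - l := by omega
          rw [this, pow_succ]
          ring
        rw [Finset.sum_congr rfl he1, ← Finset.mul_sum]
        ring
  -- assemble
  have hRs := hR (fun t => t ^ s) x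
  have hQx : Q x ≠ 0 := ne_of_gt hQpos
  have hmain : Q x * (R (fun t => t ^ s) x - x ^ s)
      = (∑ k ∈ Finset.range (n + 1), ξ k ^ s * (γ (k : ℤ) + γ ((k : ℤ) - 1)) * x ^ k * (1 - x) ^ (n - k))
        - x ^ s * Q x := by
    rw [hRs, mul_sub, mul_div_cancel₀ _ hQx]
    ring
  have hs1 : s = (s - 1) + 1 := by omega
  rw [hmain]
  rw [hs1, hstep (s - 1)]
  have hkey := key (s - 1)
  have hpow : x ^ (s - 1 + 1) = x * x ^ (s - 1) := by rw [pow_succ]; ring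
  rw [hpow]
  calc x * (∑ k ∈ Finset.range n, γ (k : ℤ) * ξ (k + 1) ^ (s - 1) * x ^ k * (1 - x) ^ (n - 1 - k))
      - x * x ^ (s - 1) * Q x
      = x * ((∑ k ∈ Finset.range n, γ (k : ℤ) * ξ (k + 1) ^ (s - 1) * x ^ k * (1 - x) ^ (n - 1 - k))
        - x ^ (s - 1) * Q x) := by ring
    _ = x * ((1 - x) * ∑ l ∈ Finset.range (s - 1), x ^ l *
            ∑ k ∈ Finset.range n,
              γ (k : ℤ) * (ξ (k + 1) ^ (s - 1 - l) - ξ k ^ (s - 1 - l)) * x ^ k * (1 - x) ^ (n - 1 - k)) := by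
        rw [hkey]
    _ = x * (1 - x) * ∑ l ∈ Finset.range (s - 1), x ^ l *
            ∑ k ∈ Finset.range n,
              γ (k : ℤ) * (ξ (k + 1) ^ (s - 1 - l) - ξ k ^ (s - 1 - l)) * x ^ k * (1 - x) ^ (n - 1 - k) := by
        ring
end

section
/- For all x ∈ [0,1], |R_n(e_2)(x) − x^2| ≤ Δ_n · x(1−x), where Δ_n = max_{0 ≤ k ≤ n−1} |x_{k+1} − x_k|. In particular R_n(e_2)(x) ≥ x^2. -/
/-- For all `x ∈ [0,1]`, `|R_n (e_2) x - x^2| ≤ Δ_n * x * (1-x)`, where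
`Δ_n = max_{0 ≤ k ≤ n-1} |ξ (k+1) - ξ k|`. In particular `R_n (e_2) x ≥ x^2`. -/
theorem stmt7 (n : ℕ) (hn : 1 ≤ n) (γ : ℤ → ℝ)
    (hneg : γ (-1) = 0) (htop : γ (n : ℤ) = 0)
    (hpos : ∀ k : ℕ, k ≤ n - 1 → 0 < γ (k : ℤ))
    (ξ : ℕ → ℝ) (hξ0 : ξ 0 = 0)
    (hξ : ∀ k : ℕ, 1 ≤ k → k ≤ n → ξ k = γ ((k : ℤ) - 1) / (γ ((k : ℤ) - 1) + γ (k : ℤ)))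
    (hmono : ∀ k : ℕ, k < n → ξ k < ξ (k + 1))
    (Q : ℝ → ℝ)
    (hQ : ∀ x : ℝ, Q x = ∑ k ∈ Finset.range n, γ (k : ℤ) * x ^ k * (1 - x) ^ (n - 1 - k))
    (R : (ℝ → ℝ) → ℝ → ℝ)
    (hR : ∀ f : ℝ → ℝ, ∀ x : ℝ, R f x =
      (∑ k ∈ Finset.range (n + 1), f (ξ k) * (γ (k : ℤ) + γ ((k : ℤ) - 1)) * x ^ k * (1 - x) ^ (n - k)) / Q x)
    (Δ : ℝ) (hΔ : IsGreatest {d : ℝ | ∃ k < n, d = |ξ (k + 1) - ξ k|} Δ) :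
    ∀ x ∈ Set.Icc (0 : ℝ) 1,
      |R (fun t => t ^ 2) x - x ^ 2| ≤ Δ * (x * (1 - x)) ∧ x ^ 2 ≤ R (fun t => t ^ 2) x := by
  have hγpos : ∀ k : ℕ, k < n → 0 < γ (k : ℤ) := fun k hk => hpos k (by omega)
  have hγnn : ∀ k : ℕ, k ≤ n → 0 ≤ γ (k : ℤ) := by
    intro k hk
    rcases lt_or_eq_of_le hk with h | h
    · exact (hγpos k h).le
    · subst h; rw [htop]
  -- formula for ξ (j+1) with clean casts
  have hξs : ∀ j : ℕ, j < n → ξ (j + 1) = γ (j : ℤ) / (γ (j : ℤ) + γ ((j : ℤ) + 1)) := by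
    intro j hj
    have h := hξ (j + 1) (by omega) (by omega)
    have e1 : ((j + 1 : ℕ) : ℤ) - 1 = (j : ℤ) := by push_cast; ring
    have e2 : ((j + 1 : ℕ) : ℤ) = (j : ℤ) + 1 := by push_cast; ring
    rw [e1, e2] at h
    exact h
  have hden : ∀ j : ℕ, j < n → 0 < γ (j : ℤ) + γ ((j : ℤ) + 1) := by
    intro j hj
    have h2 : 0 ≤ γ ((j : ℤ) + 1) := by
      have := hγnn (j + 1) (by omega); push_cast at this; exact this
    exact add_pos_of_pos_of_nonneg (hγpos j hj) h2
  -- the telescoping coefficients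
  set c : ℕ → ℝ := fun j => γ ((j : ℤ) - 1) * γ (j : ℤ) / (γ ((j : ℤ) - 1) + γ (j : ℤ)) with hc
  have hc0 : c 0 = 0 := by
    simp only [hc]
    norm_num [hneg]
  have hcn : c n = 0 := by
    simp only [hc]
    rw [htop]
    ring
  have hcsucc : ∀ j : ℕ, c (j + 1) = γ (j : ℤ) * γ ((j : ℤ) + 1) / (γ (j : ℤ) + γ ((j : ℤ) + 1)) := by
    intro j
    simp only [hc]
    have e1 : ((j + 1 : ℕ) : ℤ) - 1 = (j : ℤ) := by push_cast; ring
    have e2 : ((j + 1 : ℕ) : ℤ) = (j : ℤ) + 1 := by push_cast; ring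
    rw [e1, e2]
  have l1 : ∀ j : ℕ, j < n → γ (j : ℤ) * ξ j = c j := by
    intro j hj
    match j with
    | 0 => rw [hξ0, hc0]; ring
    | m + 1 =>
      rw [hξs m (by omega), hcsucc m]
      have hd := hden m (by omega)
      have e2 : ((m + 1 : ℕ) : ℤ) = (m : ℤ) + 1 := by push_cast; ring
      rw [e2]
      field_simp
  have l2 : ∀ j : ℕ, j < n → γ (j : ℤ) * (1 - ξ (j + 1)) = c (j + 1) := by
    intro j hj
    rw [hξs j hj, hcsucc j]
    have hd := (hden j hj).ne'
    field_simp
    ring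
  -- ξ (j+1) * (γ j + γ (j+1)) = γ j
  have l3 : ∀ j : ℕ, j < n → ξ (j + 1) * (γ (j : ℤ) + γ ((j : ℤ) + 1)) = γ (j : ℤ) := by
    intro j hj
    rw [hξs j hj]
    exact div_mul_cancel₀ _ (hden j hj).ne'
  -- Δ is nonnegative
  have hΔnn : 0 ≤ Δ := by
    obtain ⟨k, hk, hkeq⟩ := hΔ.1
    rw [hkeq]; exact abs_nonneg _
  intro x hx
  obtain ⟨hx0, hx1⟩ := hx
  have h1x : 0 ≤ 1 - x := by linarith
  -- Q x > 0
  have hQpos : 0 < Q x := by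
    rw [hQ]
    apply Finset.sum_pos'
    · intro k hk
      have := hγnn k (le_of_lt (Finset.mem_range.mp hk))
      positivity
    · rcases eq_or_lt_of_le hx1 with h | h
      · subst h
        refine ⟨n - 1, Finset.mem_range.mpr (by omega), ?_⟩
        rw [show n - 1 - (n - 1) = 0 from by omega]
        simpa using hγpos (n - 1) (by omega)
      · refine ⟨0, Finset.mem_range.mpr (by omega), ?_⟩
        have h0 := hγpos 0 (by omega)
        have : (0:ℝ) < 1 - x := by linarith
        push_cast
        positivity
  -- the three main sums
  set D : ℝ := ∑ k ∈ Finset.range n, γ (k : ℤ) * (ξ (k + 1) - ξ k) * x ^ k * (1 - x) ^ (n - 1 - k) with hD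
  set S : ℝ := ∑ k ∈ Finset.range (n + 1),
      (ξ k) ^ 2 * (γ (k : ℤ) + γ ((k : ℤ) - 1)) * x ^ k * (1 - x) ^ (n - k) with hS
  -- key identity
  have key : S - x ^ 2 * Q x = x * (1 - x) * D := by
    have hS' : S = ∑ j ∈ Finset.range n, ξ (j + 1) * γ (j : ℤ) * (x ^ (j + 1) * (1 - x) ^ (n - 1 - j)) := by
      rw [hS, Finset.sum_range_succ']
      have h0 : (ξ 0) ^ 2 * (γ ((0:ℕ) : ℤ) + γ (((0:ℕ) : ℤ) - 1)) * x ^ 0 * (1 - x) ^ (n - 0) = 0 := by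
        rw [hξ0]; ring
      rw [h0, add_zero]
      apply Finset.sum_congr rfl
      intro j hj
      have hj' := Finset.mem_range.mp hj
      have e1 : ((j + 1 : ℕ) : ℤ) - 1 = (j : ℤ) := by push_cast; ring
      have e2 : ((j + 1 : ℕ) : ℤ) = (j : ℤ) + 1 := by push_cast; ring
      have e3 : n - (j + 1) = n - 1 - j := by omega
      rw [e1, e2, e3]
      have hx2 : (ξ (j+1)) ^ 2 * (γ ((j:ℤ) + 1) + γ (j : ℤ)) = ξ (j + 1) * γ (j : ℤ) := by
        have h3 := l3 j hj'
        linear_combination ξ (j + 1) * h3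
      calc (ξ (j+1)) ^ 2 * (γ ((j:ℤ) + 1) + γ (j : ℤ)) * x ^ (j+1) * (1 - x) ^ (n - 1 - j)
          = ((ξ (j+1)) ^ 2 * (γ ((j:ℤ) + 1) + γ (j : ℤ))) * (x ^ (j+1) * (1 - x) ^ (n - 1 - j)) := by ring
        _ = ξ (j + 1) * γ (j : ℤ) * (x ^ (j + 1) * (1 - x) ^ (n - 1 - j)) := by rw [hx2]
    have hxQ : x ^ 2 * Q x = ∑ j ∈ Finset.range n, γ (j : ℤ) * x * (x ^ (j + 1) * (1 - x) ^ (n - 1 - j)) := by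
      rw [hQ, Finset.mul_sum]
      apply Finset.sum_congr rfl
      intro j _
      ring
    have hxD : x * (1 - x) * D = ∑ j ∈ Finset.range n,
        γ (j : ℤ) * (ξ (j + 1) - ξ j) * (1 - x) * (x ^ (j + 1) * (1 - x) ^ (n - 1 - j)) := by
      rw [hD, Finset.mul_sum]
      apply Finset.sum_congr rfl
      intro j _
      ring
    rw [hS', hxQ, hxD, ← sub_eq_zero, ← Finset.sum_sub_distrib, ← Finset.sum_sub_distrib]
    have htel : ∀ j ∈ Finset.range n,
        ξ (j + 1) * γ (j : ℤ) * (x ^ (j + 1) * (1 - x) ^ (n - 1 - j))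
          - γ (j : ℤ) * x * (x ^ (j + 1) * (1 - x) ^ (n - 1 - j))
          - γ (j : ℤ) * (ξ (j + 1) - ξ j) * (1 - x) * (x ^ (j + 1) * (1 - x) ^ (n - 1 - j))
        = (c j * x ^ (j + 1) * (1 - x) ^ (n - j)) - (c (j + 1) * x ^ (j + 1 + 1) * (1 - x) ^ (n - (j + 1))) := by
      intro j hj
      have hj' := Finset.mem_range.mp hj
      have h1 := l1 j hj'
      have h2 := l2 j hj'
      have e1 : n - j = n - 1 - j + 1 := by omega
      have e2 : n - (j + 1) = n - 1 - j := by omega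
      rw [e1, e2, pow_succ]
      linear_combination ((1 - x) * (x ^ (j + 1) * (1 - x) ^ (n - 1 - j))) * h1
        - (x * (x ^ (j + 1) * (1 - x) ^ (n - 1 - j))) * h2
    rw [Finset.sum_congr rfl htel,
      Finset.sum_range_sub' (fun j => c j * x ^ (j + 1) * (1 - x) ^ (n - j))]
    rw [hc0, hcn]
    ring
  -- R applied to e₂ equals S / Q x
  have hRe : R (fun t => t ^ 2) x = S / Q x := by
    rw [hR, hS]
  have hdiff : R (fun t => t ^ 2) x - x ^ 2 = x * (1 - x) * D / Q x := by
    rw [hRe, ← key]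
    field_simp
  -- D is nonnegative
  have hDnn : 0 ≤ D := by
    rw [hD]
    apply Finset.sum_nonneg
    intro k hk
    have hk' := Finset.mem_range.mp hk
    have h1 := (hγpos k hk').le
    have h2 := (hmono k hk').le
    have : 0 ≤ ξ (k + 1) - ξ k := by linarith
    positivity
  -- D ≤ Δ * Q x
  have hDle : D ≤ Δ * Q x := by
    rw [hD, hQ, Finset.mul_sum]
    apply Finset.sum_le_sum
    intro k hk
    have hk' := Finset.mem_range.mp hk
    have h1 := (hγpos k hk').le
    have h2 : ξ (k + 1) - ξ k ≤ Δ := by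
      have hmem : |ξ (k + 1) - ξ k| ∈ {d : ℝ | ∃ k < n, d = |ξ (k + 1) - ξ k|} := ⟨k, hk', rfl⟩
      have := hΔ.2 hmem
      calc ξ (k + 1) - ξ k ≤ |ξ (k + 1) - ξ k| := le_abs_self _
        _ ≤ Δ := this
    have hpw : (0:ℝ) ≤ x ^ k * (1 - x) ^ (n - 1 - k) := by positivity
    calc γ (k : ℤ) * (ξ (k + 1) - ξ k) * x ^ k * (1 - x) ^ (n - 1 - k)
        = (γ (k : ℤ) * (ξ (k + 1) - ξ k)) * (x ^ k * (1 - x) ^ (n - 1 - k)) := by ring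
      _ ≤ (γ (k : ℤ) * Δ) * (x ^ k * (1 - x) ^ (n - 1 - k)) := by
          apply mul_le_mul_of_nonneg_right _ hpw
          exact mul_le_mul_of_nonneg_left h2 h1
      _ = Δ * (γ (k : ℤ) * x ^ k * (1 - x) ^ (n - 1 - k)) := by ring
  have hdnn : 0 ≤ x * (1 - x) * D / Q x :=
    div_nonneg (mul_nonneg (mul_nonneg hx0 h1x) hDnn) hQpos.le
  constructor
  · rw [hdiff, abs_of_nonneg hdnn, div_le_iff₀ hQpos]
    calc x * (1 - x) * D ≤ x * (1 - x) * (Δ * Q x) := by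
          apply mul_le_mul_of_nonneg_left hDle (mul_nonneg hx0 h1x)
      _ = Δ * (x * (1 - x)) * Q x := by ring
  · have : 0 ≤ R (fun t => t ^ 2) x - x ^ 2 := by rw [hdiff]; exact hdnn
    linarith
end

section
/- For every natural number s ≥ 2 and every x ∈ (0,1), x^s < R_n(e_s)(x). -/
/-- For every natural number `s ≥ 2` and every `x ∈ (0,1)`,
`x^s < R_n (e_s) x`. -/
theorem stmt8 (n : ℕ) (hn : 1 ≤ n) (γ : ℤ → ℝ)
    (hneg : γ (-1) = 0) (htop : γ (n : ℤ) = 0)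
    (hpos : ∀ k : ℕ, k ≤ n - 1 → 0 < γ (k : ℤ))
    (ξ : ℕ → ℝ) (hξ0 : ξ 0 = 0)
    (hξ : ∀ k : ℕ, 1 ≤ k → k ≤ n → ξ k = γ ((k : ℤ) - 1) / (γ ((k : ℤ) - 1) + γ (k : ℤ)))
    (hmono : ∀ k : ℕ, k < n → ξ k < ξ (k + 1))
    (Q : ℝ → ℝ)
    (hQ : ∀ x : ℝ, Q x = ∑ k ∈ Finset.range n, γ (k : ℤ) * x ^ k * (1 - x) ^ (n - 1 - k))
    (R : (ℝ → ℝ) → ℝ → ℝ)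
    (hR : ∀ f : ℝ → ℝ, ∀ x : ℝ, R f x =
      (∑ k ∈ Finset.range (n + 1), f (ξ k) * (γ (k : ℤ) + γ ((k : ℤ) - 1)) * x ^ k * (1 - x) ^ (n - k)) / Q x) :
    ∀ s : ℕ, 2 ≤ s → ∀ x ∈ Set.Ioo (0 : ℝ) 1, x ^ s < R (fun t => t ^ s) x := by
  obtain ⟨N, rfl⟩ : ∃ N, n = N + 1 := ⟨n - 1, (Nat.succ_pred_eq_of_pos hn).symm⟩
  intro s hs x hx
  obtain ⟨hx0, hx1⟩ := hx
  have hx1' : (0:ℝ) < 1 - x := by linarith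
  have hγpos : ∀ j : ℕ, j ≤ N → 0 < γ (j : ℤ) := fun j hj => hpos j (by omega)
  have htop' : γ ((N:ℤ) + 1) = 0 := by push_cast at htop; exact htop
  have hγnn : ∀ j : ℕ, j ≤ N + 1 → 0 ≤ γ (j : ℤ) := by
    intro j hj
    rcases Nat.lt_or_ge j (N + 1) with h | h
    · exact (hγpos j (by omega)).le
    · have hj' : j = N + 1 := by omega
      subst hj'; push_cast; rw [htop']
  have hrel : ∀ j : ℕ, j ≤ N → ξ (j+1) * (γ (j:ℤ) + γ ((j:ℤ)+1)) = γ (j:ℤ) := by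
    intro j hj
    have h1 := hγpos j hj
    have h2 : 0 ≤ γ ((j:ℤ)+1) := by
      have := hγnn (j+1) (by omega); push_cast at this; exact this
    have hd : γ (j:ℤ) + γ ((j:ℤ)+1) ≠ 0 := by positivity
    have h3 := hξ (j+1) (by omega) (by omega)
    push_cast at h3
    rw [show (j:ℤ) + 1 - 1 = (j:ℤ) by ring] at h3
    rw [h3, div_mul_cancel₀ _ hd]
  have hrel2 : ∀ j : ℕ, j ≤ N → γ ((j:ℤ)+1) * ξ (j+1) = γ (j:ℤ) * (1 - ξ (j+1)) := by
    intro j hj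
    linear_combination hrel j hj
  have hξnn : ∀ k : ℕ, k ≤ N + 1 → 0 ≤ ξ k := by
    intro k
    induction k with
    | zero => intro _; rw [hξ0]
    | succ k ih =>
      intro hk
      have h1 := hmono k (by omega)
      have h2 := ih (by omega)
      linarith
  set p : ℕ → ℝ := fun j => x ^ j * (1 - x) ^ (N - j) with hp
  set T : ℕ → ℝ := fun m => ∑ j ∈ Finset.range (N+1), γ (j:ℤ) * ξ (j+1) ^ m * p j with hT
  set S : ℕ → ℝ := fun m => ∑ j ∈ Finset.range (N+1), γ (j:ℤ) * ξ j ^ m * p j with hS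
  have hppos : ∀ j : ℕ, 0 < p j := by
    intro j; simp only [hp]; positivity
  -- the shift identity
  have hA : ∀ m : ℕ, x * T m - x * T (m+1) = (1-x) * S (m+1) := by
    intro m
    have lhs : x * T m - x * T (m+1)
        = ∑ j ∈ Finset.range (N+1),
            γ ((j:ℤ)+1) * ξ (j+1) ^ (m+1) * (x ^ (j+1) * (1-x) ^ (N - j)) := by
      simp only [hT, Finset.mul_sum, ← Finset.sum_sub_distrib]
      refine Finset.sum_congr rfl (fun j hj => ?_)
      have hjN : j ≤ N := by
        have := Finset.mem_range.mp hj; omega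
      have h2 := hrel2 j hjN
      simp only [hp]
      linear_combination (-(ξ (j+1) ^ m * x ^ (j+1) * (1-x) ^ (N - j))) * h2
    have rhs : (1-x) * S (m+1)
        = ∑ k ∈ Finset.range (N+1),
            γ (k:ℤ) * ξ k ^ (m+1) * (x ^ k * (1-x) ^ (N + 1 - k)) := by
      simp only [hS, Finset.mul_sum]
      refine Finset.sum_congr rfl (fun k hk => ?_)
      have hkN : k ≤ N := by
        have := Finset.mem_range.mp hk; omega
      have : (1-x) ^ (N + 1 - k) = (1-x) * (1-x) ^ (N - k) := by
        rw [show N + 1 - k = (N - k) + 1 by omega, pow_succ]; ring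
      simp only [hp, this]; ring
    have e1 : (∑ j ∈ Finset.range (N+1),
          γ ((j:ℤ)+1) * ξ (j+1) ^ (m+1) * (x ^ (j+1) * (1-x) ^ (N - j)))
        = ∑ j ∈ Finset.range N,
          γ ((j:ℤ)+1) * ξ (j+1) ^ (m+1) * (x ^ (j+1) * (1-x) ^ (N - j)) := by
      rw [Finset.sum_range_succ, htop']
      ring
    have e2 : (∑ k ∈ Finset.range (N+1),
          γ (k:ℤ) * ξ k ^ (m+1) * (x ^ k * (1-x) ^ (N + 1 - k)))
        = ∑ i ∈ Finset.range N,
          γ ((i+1:ℕ):ℤ) * ξ (i+1) ^ (m+1) * (x ^ (i+1) * (1-x) ^ (N + 1 - (i+1))) := by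
      rw [Finset.sum_range_succ', hξ0]
      simp
    rw [lhs, rhs, e1, e2]
    refine Finset.sum_congr rfl (fun i hi => ?_)
    have hsub : (N + 1 - (i+1)) = N - i := by omega
    rw [hsub]
    push_cast
    ring
  have hstep : ∀ m : ℕ, x * T m < T (m+1) := by
    intro m
    have hdiff : 0 < T (m+1) - S (m+1) := by
      simp only [hT, hS, ← Finset.sum_sub_distrib]
      apply Finset.sum_pos
      · intro j hj
        have hjN : j ≤ N := by
          have := Finset.mem_range.mp hj; omega
        have h1 := hγpos j hjN
        have h2 := hppos j
        have h3 : ξ j ^ (m+1) < ξ (j+1) ^ (m+1) :=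
          pow_lt_pow_left₀ (hmono j (by omega)) (hξnn j (by omega)) (by omega)
        nlinarith [mul_pos h1 h2]
      · exact ⟨0, Finset.mem_range.mpr (by omega)⟩
    have h := mul_pos hx1' hdiff
    linarith [hA m]
  have hmain : ∀ m : ℕ, x ^ (m+1) * T 0 < T (m+1) := by
    intro m
    induction m with
    | zero => have := hstep 0; simpa using this
    | succ m ih =>
      have h1 := hstep (m+1)
      have h2 := mul_lt_mul_of_pos_left ih hx0
      calc x ^ (m+2) * T 0 = x * (x ^ (m+1) * T 0) := by ring
        _ < x * T (m+1) := h2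
        _ < T (m+2) := h1
  have hQT : Q x = T 0 := by
    rw [hQ, hT]
    refine Finset.sum_congr rfl (fun k hk => ?_)
    have : N + 1 - 1 - k = N - k := by omega
    simp only [hp, this, pow_zero]; ring
  have hQpos : 0 < T 0 := by
    simp only [hT]
    apply Finset.sum_pos
    · intro j hj
      have hjN : j ≤ N := by
        have := Finset.mem_range.mp hj; omega
      have := hγpos j hjN
      have := hppos j
      nlinarith
    · exact ⟨0, Finset.mem_range.mpr (by omega)⟩
  obtain ⟨t, rfl⟩ : ∃ t, s = t + 2 := ⟨s - 2, by omega⟩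
  have hNum : (∑ k ∈ Finset.range (N + 1 + 1), ξ k ^ (t+2) * (γ (k:ℤ) + γ ((k:ℤ) - 1)) * x ^ k * (1 - x) ^ (N + 1 - k))
      = x * T (t+1) := by
    rw [Finset.sum_range_succ', hT, Finset.mul_sum]
    have hfirst : ξ 0 ^ (t+2) * (γ ((0:ℕ):ℤ) + γ (((0:ℕ):ℤ) - 1)) * x ^ 0 * (1 - x) ^ (N + 1 - 0) = 0 := by
      rw [hξ0]; ring
    rw [hfirst, add_zero]
    refine Finset.sum_congr rfl (fun i hi => ?_)
    have hiN : i ≤ N := by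
      have := Finset.mem_range.mp hi; omega
    have hc : ((i+1:ℕ):ℤ) - 1 = (i:ℤ) := by push_cast; ring
    have hc2 : ((i+1:ℕ):ℤ) = (i:ℤ) + 1 := by push_cast; ring
    have hsub : N + 1 - (i+1) = N - i := by omega
    rw [hc, hc2, hsub]
    have h := hrel i hiN
    simp only [hp]
    linear_combination (ξ (i+1) ^ (t+1) * x ^ (i+1) * (1-x) ^ (N - i)) * h
  rw [hR]
  beta_reduce
  rw [hNum, hQT, lt_div_iff₀ hQpos]
  have h1 := mul_lt_mul_of_pos_left (hmain t) hx0
  have h2 : x ^ (t+2) * T 0 = x * (x ^ (t+1) * T 0) := by ring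
  linarith
end

section
/- For all x ∈ [0,1], 0 ≤ R_n(e_3)(x) − x^3 ≤ 3·(R_n(e_2)(x) − x^2). -/
/-- For all `x ∈ [0,1]`,
`0 ≤ R_n (e_3) x - x^3 ≤ 3 * (R_n (e_2) x - x^2)`. -/
theorem stmt9 (n : ℕ) (hn : 1 ≤ n) (γ : ℤ → ℝ)
    (hneg : γ (-1) = 0) (htop : γ (n : ℤ) = 0)
    (hpos : ∀ k : ℕ, k ≤ n - 1 → 0 < γ (k : ℤ))
    (ξ : ℕ → ℝ) (hξ0 : ξ 0 = 0)
    (hξ : ∀ k : ℕ, 1 ≤ k → k ≤ n → ξ k = γ ((k : ℤ) - 1) / (γ ((k : ℤ) - 1) + γ (k : ℤ)))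
    (hmono : ∀ k : ℕ, k < n → ξ k ≤ ξ (k + 1))
    (Q : ℝ → ℝ)
    (hQ : ∀ x : ℝ, Q x = ∑ k ∈ Finset.range n, γ (k : ℤ) * x ^ k * (1 - x) ^ (n - 1 - k))
    (R : (ℝ → ℝ) → ℝ → ℝ)
    (hR : ∀ f : ℝ → ℝ, ∀ x : ℝ, R f x =
      (∑ k ∈ Finset.range (n + 1), f (ξ k) * (γ (k : ℤ) + γ ((k : ℤ) - 1)) * x ^ k * (1 - x) ^ (n - k)) / Q x) :
    ∀ x ∈ Set.Icc (0 : ℝ) 1,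
      0 ≤ R (fun t => t ^ 3) x - x ^ 3 ∧
        R (fun t => t ^ 3) x - x ^ 3 ≤ 3 * (R (fun t => t ^ 2) x - x ^ 2) := by
  intro x hx
  obtain ⟨hx0, hx1⟩ := hx
  have h1x : (0:ℝ) ≤ 1 - x := by linarith
  -- basic γ facts
  have hγpos : ∀ k : ℕ, k < n → 0 < γ (k:ℤ) := fun k hk => hpos k (by omega)
  have hγnn : ∀ k : ℕ, k ≤ n → 0 ≤ γ (k:ℤ) := by
    intro k hk
    rcases eq_or_lt_of_le hk with h | h
    · subst h; rw [htop]
    · exact (hγpos k h).le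
  -- the key relation between γ and ξ
  have hrel : ∀ k : ℕ, k < n → (γ (k:ℤ) + γ ((k:ℤ)+1)) * ξ (k+1) = γ (k:ℤ) := by
    intro k hk
    have h1 := hξ (k+1) (by omega) (by omega)
    have e1 : ((k+1:ℕ):ℤ) - 1 = (k:ℤ) := by push_cast; ring
    have e2 : ((k+1:ℕ):ℤ) = (k:ℤ) + 1 := by push_cast; ring
    rw [e1, e2] at h1
    have hg2 : 0 ≤ γ ((k:ℤ)+1) := by
      have := hγnn (k+1) (by omega)
      rwa [e2] at this
    have hd : 0 < γ (k:ℤ) + γ ((k:ℤ)+1) := by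
      have := hγpos k hk; linarith
    rw [h1, mul_div_cancel₀ _ hd.ne']
  -- ξ monotone on [0, n]
  have hξmono2 : ∀ j k : ℕ, j ≤ k → k ≤ n → ξ j ≤ ξ k := by
    intro j k hjk hkn
    induction k with
    | zero => interval_cases j; exact le_rfl
    | succ m ih =>
      rcases Nat.lt_or_ge j (m+1) with h | h
      · exact le_trans (ih (by omega) (by omega)) (hmono m (by omega))
      · have : j = m + 1 := by omega
        rw [this]
  have hξnn : ∀ k : ℕ, k ≤ n → 0 ≤ ξ k := fun k hk => hξ0 ▸ hξmono2 0 k (Nat.zero_le _) hk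
  have hξtop : ξ n = 1 := by
    have h1 := hξ n hn le_rfl
    have e1 : ((n-1:ℕ):ℤ) = (n:ℤ) - 1 := by omega
    have hp : 0 < γ ((n:ℤ)-1) := by rw [← e1]; exact hpos (n-1) le_rfl
    rw [h1, htop, add_zero, div_self hp.ne']
  have hξle1 : ∀ k : ℕ, k ≤ n → ξ k ≤ 1 := fun k hk => hξtop ▸ hξmono2 k n hk le_rfl
  -- Q is positive on [0,1]
  have hQpos : 0 < Q x := by
    rw [hQ]
    rcases lt_or_eq_of_le hx1 with h | h
    · apply Finset.sum_pos'
      · intro k hk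
        have hg := hγnn k (by exact le_of_lt (by simpa using Finset.mem_range.mp hk))
        positivity
      · refine ⟨0, Finset.mem_range.mpr (by omega), ?_⟩
        have hg : 0 < γ ((0:ℕ):ℤ) := hγpos 0 (by omega)
        have h2 : (0:ℝ) < 1 - x := by linarith
        positivity
    · apply Finset.sum_pos'
      · intro k hk
        have hg := hγnn k (le_of_lt (by simpa using Finset.mem_range.mp hk))
        positivity
      · refine ⟨n-1, Finset.mem_range.mpr (by omega), ?_⟩
        have hg : 0 < γ (((n-1:ℕ)):ℤ) := hγpos (n-1) (by omega)
        subst h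
        simp only [sub_self, Nat.sub_self, pow_zero, one_pow, mul_one]
        simpa using hg
  -- THE KEY IDENTITY, parametric in r, with telescoping data m, c
  have key : ∀ (r : ℕ) (m c : ℕ → ℝ), c 0 = 0 → c n = 0 →
      (∀ k, k < n → γ (k:ℤ) * (ξ k ^ r * (1-x) + ξ (k+1) ^ r * x - x ^ r)
          - x * (1-x) * (γ (k:ℤ) * (ξ (k+1) - ξ k) * m k)
          = c (k+1) * x - c k * (1-x)) →
      (∑ k ∈ Finset.range (n+1), ξ k ^ r * (γ (k:ℤ) + γ ((k:ℤ)-1)) * x ^ k * (1-x) ^ (n-k))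
        - x ^ r * Q x
      = x * (1-x) * ∑ k ∈ Finset.range n,
          γ (k:ℤ) * (ξ (k+1) - ξ k) * m k * (x ^ k * (1-x) ^ (n-1-k)) := by
    intro r m c hc0 hcn hterm
    -- split the numerator sum
    have hA : (∑ k ∈ Finset.range (n+1), ξ k ^ r * (γ (k:ℤ) + γ ((k:ℤ)-1)) * x ^ k * (1-x) ^ (n-k))
        = (∑ k ∈ Finset.range (n+1), ξ k ^ r * γ (k:ℤ) * x ^ k * (1-x) ^ (n-k))
          + (∑ k ∈ Finset.range (n+1), ξ k ^ r * γ ((k:ℤ)-1) * x ^ k * (1-x) ^ (n-k)) := by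
      rw [← Finset.sum_add_distrib]
      exact Finset.sum_congr rfl (fun k _ => by ring)
    have hB : (∑ k ∈ Finset.range (n+1), ξ k ^ r * γ (k:ℤ) * x ^ k * (1-x) ^ (n-k))
        = ∑ k ∈ Finset.range n, ξ k ^ r * γ (k:ℤ) * x ^ k * (1-x) ^ (n-k) := by
      rw [Finset.sum_range_succ, htop]
      ring
    have hC : (∑ k ∈ Finset.range (n+1), ξ k ^ r * γ ((k:ℤ)-1) * x ^ k * (1-x) ^ (n-k))
        = ∑ k ∈ Finset.range n, ξ (k+1) ^ r * γ (k:ℤ) * x ^ (k+1) * (1-x) ^ (n-(k+1)) := by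
      rw [Finset.sum_range_succ']
      have h0 : ξ 0 ^ r * γ (((0:ℕ):ℤ)-1) * x ^ 0 * (1-x) ^ (n-0) = 0 := by
        norm_num [hneg]
      rw [h0, add_zero]
      refine Finset.sum_congr rfl (fun k _ => ?_)
      have e1 : ((k+1:ℕ):ℤ) - 1 = (k:ℤ) := by push_cast; ring
      rw [e1]
    have hQx : x ^ r * Q x = ∑ k ∈ Finset.range n, γ (k:ℤ) * x ^ r * (x ^ k * (1-x) ^ (n-1-k)) := by
      rw [hQ, Finset.mul_sum]
      exact Finset.sum_congr rfl (fun k _ => by ring)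
    rw [hA, hB, hC, hQx]
    -- now everything is a sum over range n; show difference of the two sides telescopes to 0
    rw [Finset.mul_sum]
    rw [← sub_eq_zero, ← Finset.sum_add_distrib, ← Finset.sum_sub_distrib, ← Finset.sum_sub_distrib]
    have htel : ∀ k ∈ Finset.range n,
        (ξ k ^ r * γ (k:ℤ) * x ^ k * (1-x) ^ (n-k)
          + ξ (k+1) ^ r * γ (k:ℤ) * x ^ (k+1) * (1-x) ^ (n-(k+1))
          - γ (k:ℤ) * x ^ r * (x ^ k * (1-x) ^ (n-1-k)))
          - x * (1-x) * (γ (k:ℤ) * (ξ (k+1) - ξ k) * m k * (x ^ k * (1-x) ^ (n-1-k)))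
        = (fun j => c j * x ^ j * (1-x) ^ (n-j)) (k+1) - (fun j => c j * x ^ j * (1-x) ^ (n-j)) k := by
      intro k hk
      have hkn : k < n := Finset.mem_range.mp hk
      have ek1 : n - (k+1) = n - 1 - k := by omega
      have ek2 : n - k = n - 1 - k + 1 := by omega
      simp only
      rw [ek1, ek2, pow_succ, pow_succ]
      linear_combination (x ^ k * (1-x) ^ (n-1-k)) * hterm k hkn
    rw [Finset.sum_congr rfl htel, Finset.sum_range_sub (fun j => c j * x ^ j * (1-x) ^ (n-j))]
    simp [hc0, hcn]
  -- instantiate for r = 2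
  have key2 := key 2 (fun _ => 1) (fun k => -(γ (k:ℤ) * ξ k * (ξ k + x)))
    (by simp [hξ0]) (by simp [htop])
    (by
      intro k hk
      have h := hrel k hk
      have e2 : ((k+1:ℕ):ℤ) = (k:ℤ) + 1 := by push_cast; ring
      simp only [e2]
      linear_combination (ξ (k+1) * x + x^2) * h)
  -- instantiate for r = 3
  have key3 := key 3 (fun k => ξ k + ξ (k+1) + x)
    (fun k => -(γ (k:ℤ) * ξ k * (ξ k ^ 2 + ξ k * x + x ^ 2)))
    (by simp [hξ0]) (by simp [htop])
    (by
      intro k hk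
      have h := hrel k hk
      have e2 : ((k+1:ℕ):ℤ) = (k:ℤ) + 1 := by push_cast; ring
      simp only [e2]
      linear_combination (ξ (k+1) ^ 2 * x + ξ (k+1) * x ^ 2 + x ^ 3) * h)
  set S2 : ℝ := ∑ k ∈ Finset.range n,
      γ (k:ℤ) * (ξ (k+1) - ξ k) * (fun _ : ℕ => (1:ℝ)) k * (x ^ k * (1-x) ^ (n-1-k)) with hS2
  set S3 : ℝ := ∑ k ∈ Finset.range n,
      γ (k:ℤ) * (ξ (k+1) - ξ k) * (fun k => ξ k + ξ (k+1) + x) k * (x ^ k * (1-x) ^ (n-1-k)) with hS3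
  -- positivity and comparison of S2, S3
  have hS2nn : 0 ≤ S2 := by
    apply Finset.sum_nonneg
    intro k hk
    have hkn : k < n := Finset.mem_range.mp hk
    have h1 := (hγpos k hkn).le
    have h2 := sub_nonneg.mpr (hmono k hkn)
    have h3 : (0:ℝ) ≤ x ^ k * (1-x) ^ (n-1-k) := by positivity
    simp only
    nlinarith [mul_nonneg (mul_nonneg h1 h2) h3]
  have hS3nn : 0 ≤ S3 := by
    apply Finset.sum_nonneg
    intro k hk
    have hkn : k < n := Finset.mem_range.mp hk
    have h1 := (hγpos k hkn).le
    have h2 := sub_nonneg.mpr (hmono k hkn)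
    have h3 : (0:ℝ) ≤ x ^ k * (1-x) ^ (n-1-k) := by positivity
    have h4 : 0 ≤ ξ k + ξ (k+1) + x := by
      have := hξnn k (by omega); have := hξnn (k+1) (by omega); linarith
    simp only
    nlinarith [mul_nonneg (mul_nonneg (mul_nonneg h1 h2) h4) h3]
  have hS3le : S3 ≤ 3 * S2 := by
    rw [hS2, hS3, Finset.mul_sum]
    apply Finset.sum_le_sum
    intro k hk
    have hkn : k < n := Finset.mem_range.mp hk
    have h1 := (hγpos k hkn).le
    have h2 := sub_nonneg.mpr (hmono k hkn)
    have h3 : (0:ℝ) ≤ x ^ k * (1-x) ^ (n-1-k) := by positivity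
    have h4 : ξ k + ξ (k+1) + x ≤ 3 := by
      have := hξle1 k (by omega); have := hξle1 (k+1) (by omega); linarith
    simp only
    nlinarith [mul_nonneg (mul_nonneg h1 h2) h3]
  -- express the differences
  have h3eq : R (fun t => t ^ 3) x - x ^ 3 = x * (1-x) * S3 / Q x := by
    simp only [hR]
    rw [div_sub' hQpos.ne', eq_div_iff hQpos.ne', div_mul_cancel₀ _ hQpos.ne']
    linarith [key3]
  have h2eq : R (fun t => t ^ 2) x - x ^ 2 = x * (1-x) * S2 / Q x := by
    simp only [hR]
    rw [div_sub' hQpos.ne', eq_div_iff hQpos.ne', div_mul_cancel₀ _ hQpos.ne']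
    linarith [key2]
  rw [h3eq, h2eq]
  constructor
  · apply div_nonneg _ hQpos.le
    have hxx : 0 ≤ x * (1-x) := mul_nonneg hx0 h1x
    nlinarith
  · have hhh : x * (1-x) * S3 ≤ 3 * (x * (1-x) * S2) := by
      nlinarith [mul_le_mul_of_nonneg_left hS3le (mul_nonneg hx0 h1x)]
    have e : 3 * (x * (1-x) * S2 / Q x) = 3 * (x * (1-x) * S2) / Q x := by ring
    rw [e, div_le_div_iff₀ hQpos hQpos]
    nlinarith [mul_le_mul_of_nonneg_right hhh hQpos.le]
end

section
/- The fourth central moment of the rational Bernstein operator satisfies, for all x ∈ [0,1]: R_n[(e_1−x)^4](x) ≤ Δ_n · R_n[(e_1−x)^2](x) · (6x^2 − 15x + 12 + Δ_n), where Δ_n = max_{0 ≤ k ≤ n−1}(x_{k+1} − x_k). -/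
open Finset

lemma abel_sum (N : ℕ) (a h : ℕ → ℝ) :
    ∑ k ∈ range (N+1), a k * h k
      = (∑ k ∈ range (N+1), a k) * h N
        - ∑ j ∈ range N, (∑ k ∈ range (j+1), a k) * (h (j+1) - h j) := by
  induction N with
  | zero => simp
  | succ N ih =>
      rw [sum_range_succ (f := fun k => a k * h k), ih,
        sum_range_succ (f := fun j => (∑ k ∈ range (j+1), a k) * (h (j+1) - h j)),
        sum_range_succ (n := N+1) (f := a), sum_range_succ (n := N) (f := a)]
      ring

lemma scalarR (x s : ℝ) (hx : 0 ≤ x) (hs : s ≤ 1) (hxs : x ≤ s) :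
    x * (1 - s) ≤ (1 - (s - x)) * (s * (1 - x)) := by
  nlinarith [mul_nonneg (sub_nonneg.2 hxs) (by nlinarith : (0:ℝ) ≤ 1 - s + s * x)]

lemma scalarL (x s : ℝ) (hs : 0 ≤ s) (hx : x ≤ 1) (hsx : s ≤ x) :
    s * (1 - x) ≤ (1 + (s - x)) * (x * (1 - s)) := by
  nlinarith [mul_nonneg (sub_nonneg.2 hsx) (by nlinarith : (0:ℝ) ≤ s + (1 - s) * (1 - x))]

lemma cubeR (a b d : ℝ) (ha : 0 ≤ a) (hab : a ≤ b) (hd : b - a ≤ d) :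
    b^3 - a^3 ≤ 3*d*b^2 := by
  nlinarith [mul_nonneg (sub_nonneg.2 hd) (sq_nonneg b),
    mul_nonneg (mul_nonneg (sub_nonneg.2 hab) (sub_nonneg.2 hab)) (by linarith : (0:ℝ) ≤ 2*b + a)]

lemma cubeL (a b d : ℝ) (hb : b ≤ 0) (hab : a ≤ b) (hd : b - a ≤ d) :
    b^3 - a^3 ≤ 3*d*a^2 := by
  nlinarith [mul_nonneg (sub_nonneg.2 hd) (sq_nonneg a),
    mul_nonneg (mul_nonneg (sub_nonneg.2 hab) (sub_nonneg.2 hab)) (by linarith : (0:ℝ) ≤ -(2*a + b))]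

lemma cubeM (a b d : ℝ) (ha : a ≤ 0) (hb : 0 ≤ b) (hd : b - a ≤ d) (hdnn : 0 ≤ d) :
    b^3 - a^3 ≤ d^2*(b-a) := by
  nlinarith [mul_nonneg (sub_nonneg.2 (ha.trans hb)) (by nlinarith [mul_nonpos_of_nonpos_of_nonneg ha hb] : (0:ℝ) ≤ d^2 - (a^2 + a*b + b^2))]

/-- For all `x ∈ [0,1]`,
`R_n ((e_1 - x)^4) x ≤ Δ_n * R_n ((e_1 - x)^2) x * (6x^2 - 15x + 12 + Δ_n)`,
where `Δ_n = max_{0 ≤ k ≤ n-1} (ξ (k+1) - ξ k)`. -/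
theorem stmt12 (n : ℕ) (hn : 1 ≤ n) (γ : ℤ → ℝ)
    (hneg : γ (-1) = 0) (htop : γ (n : ℤ) = 0)
    (hpos : ∀ k : ℕ, k ≤ n - 1 → 0 < γ (k : ℤ))
    (ξ : ℕ → ℝ) (hξ0 : ξ 0 = 0)
    (hξ : ∀ k : ℕ, 1 ≤ k → k ≤ n → ξ k = γ ((k : ℤ) - 1) / (γ ((k : ℤ) - 1) + γ (k : ℤ)))
    (hmono : ∀ k : ℕ, k < n → ξ k ≤ ξ (k + 1))
    (Q : ℝ → ℝ)
    (hQ : ∀ x : ℝ, Q x = ∑ k ∈ Finset.range n, γ (k : ℤ) * x ^ k * (1 - x) ^ (n - 1 - k))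
    (R : (ℝ → ℝ) → ℝ → ℝ)
    (hR : ∀ f : ℝ → ℝ, ∀ x : ℝ, R f x =
      (∑ k ∈ Finset.range (n + 1), f (ξ k) * (γ (k : ℤ) + γ ((k : ℤ) - 1)) * x ^ k * (1 - x) ^ (n - k)) / Q x)
    (Δ : ℝ) (hΔ : IsGreatest {d : ℝ | ∃ k < n, d = ξ (k + 1) - ξ k} Δ) :
    ∀ x ∈ Set.Icc (0 : ℝ) 1,
      R (fun t => (t - x) ^ 4) x
        ≤ Δ * R (fun t => (t - x) ^ 2) x * (6 * x ^ 2 - 15 * x + 12 + Δ) := by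
  intro x hx
  obtain ⟨hx0, hx1⟩ := hx
  have h1x : (0:ℝ) ≤ 1 - x := by linarith
  classical
  -- basic positivity
  have hΓpos : ∀ k : ℕ, k < n → 0 < γ (k : ℤ) := fun k hk => hpos k (by omega)
  have hΓnn : ∀ k : ℕ, k ≤ n → 0 ≤ γ (k : ℤ) := by
    intro k hk
    rcases lt_or_eq_of_le hk with h | h
    · exact (hΓpos k h).le
    · rw [h, htop]
  have hcast : ∀ j : ℕ, ((j + 1 : ℕ) : ℤ) - 1 = (j : ℤ) := by intro j; push_cast; ring
  have hcast2 : ∀ j : ℕ, ((j + 1 : ℕ) : ℤ) = (j : ℤ) + 1 := by intro j; push_cast; ring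
  have hΓnn1 : ∀ j : ℕ, j + 1 ≤ n → 0 ≤ γ ((j:ℤ) + 1) := by
    intro j hj
    have := hΓnn (j+1) hj
    rwa [hcast2 j] at this
  set c : ℕ → ℝ := fun k => γ (k : ℤ) + γ ((k : ℤ) - 1) with hc
  set g : ℕ → ℝ := fun k => ξ k - x with hgdef
  set w : ℕ → ℝ := fun k => c k * x ^ k * (1 - x) ^ (n - k) with hw
  clear_value c g w
  have hc0 : c 0 = γ (0 : ℤ) := by simp [hc, hneg]
  have hcs : ∀ j : ℕ, c (j+1) = γ ((j:ℤ)+1) + γ (j:ℤ) := by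
    intro j; simp only [hc]; rw [hcast j, hcast2 j]
  have hξs : ∀ j : ℕ, j < n → ξ (j+1) = γ (j:ℤ) / (γ (j:ℤ) + γ ((j:ℤ)+1)) := by
    intro j hj
    have h := hξ (j+1) (by omega) (by omega)
    rwa [hcast j, hcast2 j] at h
  have hden : ∀ j : ℕ, j < n → 0 < γ (j:ℤ) + γ ((j:ℤ)+1) := by
    intro j hj
    have h1 := hΓpos j hj
    have h2 := hΓnn1 j hj
    linarith
  -- identities
  have hid1 : ∀ j : ℕ, j < n → ξ (j+1) * c (j+1) = γ (j:ℤ) := by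
    intro j hj
    rw [hξs j hj, hcs j, add_comm (γ ((j:ℤ)+1))]
    exact div_mul_cancel₀ _ (hden j hj).ne'
  have hid2 : ∀ j : ℕ, j < n → (1 - ξ (j+1)) * c (j+1) = γ ((j:ℤ)+1) := by
    intro j hj
    rw [sub_mul, one_mul, hid1 j hj, hcs j]
    ring
  have hgamma_eq : ∀ k : ℕ, k < n → γ (k:ℤ) = (1 - ξ k) * c k := by
    intro k hk
    match k with
    | 0 => rw [hξ0, hc0]; ring
    | (j+1) =>
        rw [hcast2 j]
        exact (hid2 j (by omega)).symm
  -- ξ bounds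
  have hξ01 : ∀ k : ℕ, k ≤ n → 0 ≤ ξ k ∧ ξ k ≤ 1 := by
    intro k hk
    match k with
    | 0 => rw [hξ0]; norm_num
    | (j+1) =>
        rw [hξs j (by omega)]
        constructor
        · exact div_nonneg (hΓnn j (by omega)) (hden j (by omega)).le
        · rw [div_le_one (hden j (by omega))]
          linarith [hΓnn1 j hk]
  have hξn : ξ n = 1 := by
    obtain ⟨i, rfl⟩ : ∃ i, n = i + 1 := ⟨n - 1, by omega⟩
    rw [hξs i (by omega)]
    have h0 : γ ((i:ℤ)+1) = 0 := by rw [← hcast2 i]; exact htop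
    rw [h0, add_zero, div_self (hΓpos i (by omega)).ne']
  have hξlt1 : ∀ k : ℕ, k < n → ξ k < 1 := by
    intro k hk
    match k with
    | 0 => rw [hξ0]; norm_num
    | (j+1) =>
        rw [hξs j (by omega), div_lt_one (hden j (by omega))]
        have := hΓpos (j+1) hk
        rw [hcast2 j] at this
        linarith
  have hξmono : ∀ j : ℕ, j ≤ n → ∀ i : ℕ, i ≤ j → ξ i ≤ ξ j := by
    intro j
    induction j with
    | zero =>
        intro _ i hi
        have : i = 0 := by omega
        rw [this]
    | succ j ih =>
        intro hjn i hi
        rcases Nat.eq_or_lt_of_le hi with h | h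
        · rw [h]
        · exact le_trans (ih (by omega) i (by omega)) (hmono j (by omega))
  have hgmono : ∀ i j : ℕ, i ≤ j → j ≤ n → g i ≤ g j := by
    intro i j hij hjn
    simp only [hgdef]
    exact sub_le_sub_right (hξmono j hjn i hij) x
  -- Δ facts
  have hΔnn : 0 ≤ Δ := by
    obtain ⟨k, hk, hd⟩ := hΔ.1
    rw [hd]; linarith [hmono k hk]
  have hgap : ∀ j : ℕ, j < n → ξ (j+1) - ξ j ≤ Δ := fun j hj => hΔ.2 ⟨j, hj, rfl⟩
  have hgap' : ∀ j : ℕ, j < n → g (j+1) - g j ≤ Δ := by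
    intro j hj
    have := hgap j hj
    simp only [hgdef]; linarith
  -- nonnegativity of c, w
  have hcnn : ∀ k : ℕ, k ≤ n → 0 ≤ c k := by
    intro k hk
    match k with
    | 0 => rw [hc0]; exact hΓnn 0 (by omega)
    | (j+1) => rw [hcs j]; exact add_nonneg (hΓnn1 j hk) (hΓnn j (by omega))
  have hwnn : ∀ k : ℕ, k ≤ n → 0 ≤ w k := by
    intro k hk
    simp only [hw]
    exact mul_nonneg (mul_nonneg (hcnn k hk) (pow_nonneg hx0 k)) (pow_nonneg h1x _)
  have hgub : ∀ k : ℕ, k ≤ n → g k ≤ 1 := by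
    intro k hk; simp only [hgdef]; linarith [(hξ01 k hk).2]
  have hglb : ∀ k : ℕ, k ≤ n → -1 ≤ g k := by
    intro k hk; simp only [hgdef]; linarith [(hξ01 k hk).1]
  -- decay of weights to the right of x
  have WR : ∀ k : ℕ, k < n → 0 ≤ g k → w (k+1) ≤ (1 - g k) * w k := by
    intro k hk hgk
    have hkn : k ≤ n := le_of_lt hk
    have hξk1 : 0 < ξ (k+1) := by
      rw [hξs k hk]
      exact div_pos (hΓpos k hk) (hden k hk)
    have hxk : x ≤ ξ k := by simp only [hgdef] at hgk; linarith
    have hξku : ξ k ≤ 1 := (hξ01 k hkn).2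
    have hck := hcnn k hkn
    have hmon : ξ k ≤ ξ (k+1) := hmono k hk
    have hkey : c (k+1) * x ≤ (1 - g k) * (c k * (1 - x)) := by
      have h1 : ξ (k+1) * (c (k+1) * x) = x * ((1 - ξ k) * c k) := by
        rw [← mul_assoc, hid1 k hk, hgamma_eq k hk]; ring
      have hs := scalarR x (ξ k) hx0 hξku hxk
      have h2 : x * ((1 - ξ k) * c k) ≤ ξ (k+1) * ((1 - g k) * (c k * (1 - x))) := by
        have hgk1 : 0 ≤ 1 - g k := by linarith [hgub k hkn]
        have hs' : x * (1 - ξ k) * c k ≤ ((1 - (ξ k - x)) * (ξ k * (1 - x))) * c k :=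
          mul_le_mul_of_nonneg_right hs hck
        have h3 : ((1 - (ξ k - x)) * (ξ k * (1 - x))) * c k
            ≤ ((1 - (ξ k - x)) * (ξ (k+1) * (1 - x))) * c k := by
          have : (0:ℝ) ≤ (1 - (ξ k - x)) * (1 - x) * c k := by
            apply mul_nonneg (mul_nonneg _ h1x) hck
            simp only [hgdef] at hgk1 ⊢; linarith
          nlinarith [this, hmon]
        simp only [hgdef]
        nlinarith [hs', h3]
      have := le_trans (le_of_eq h1) h2
      exact le_of_mul_le_mul_left this hξk1
    have hfac : (0:ℝ) ≤ x ^ k * (1 - x) ^ (n - (k+1)) :=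
      mul_nonneg (pow_nonneg hx0 k) (pow_nonneg h1x _)
    have hexp : n - k = (n - (k+1)) + 1 := by omega
    have e1 : w (k+1) = (c (k+1) * x) * (x ^ k * (1 - x) ^ (n - (k+1))) := by
      simp only [hw]; rw [pow_succ]; ring
    have e2 : (1 - g k) * w k
        = ((1 - g k) * (c k * (1 - x))) * (x ^ k * (1 - x) ^ (n - (k+1))) := by
      simp only [hw]; rw [hexp, pow_succ]; ring
    rw [e1, e2]
    exact mul_le_mul_of_nonneg_right hkey hfac
  -- decay of weights to the left of x
  have WL : ∀ j : ℕ, j + 1 < n → g (j+1) ≤ 0 → w j ≤ (1 + g (j+1)) * w (j+1) := by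
    intro j hj hgj
    have hj' : j < n := by omega
    have hξlt : ξ j < 1 := hξlt1 j hj'
    have hxj : ξ (j+1) ≤ x := by simp only [hgdef] at hgj; linarith
    have hξj1nn : 0 ≤ ξ (j+1) := (hξ01 (j+1) (by omega)).1
    have hcj1 := hcnn (j+1) (by omega)
    have hmon : ξ j ≤ ξ (j+1) := hmono j hj'
    have hkey : c j * (1 - x) ≤ (1 + g (j+1)) * (c (j+1) * x) := by
      have h1 : (1 - ξ j) * (c j * (1 - x)) = (ξ (j+1) * c (j+1)) * (1 - x) := by
        rw [hid1 j hj', hgamma_eq j hj']; ring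
      have hs := scalarL x (ξ (j+1)) hξj1nn hx1 hxj
      have h2 : (ξ (j+1) * c (j+1)) * (1 - x) ≤ (1 - ξ j) * ((1 + g (j+1)) * (c (j+1) * x)) := by
        have hg1 : 0 ≤ 1 + g (j+1) := by linarith [hglb (j+1) (by omega : j + 1 ≤ n)]
        have hs' : ξ (j+1) * (1 - x) * c (j+1)
            ≤ ((1 + (ξ (j+1) - x)) * (x * (1 - ξ (j+1)))) * c (j+1) :=
          mul_le_mul_of_nonneg_right hs hcj1
        have h3 : ((1 + (ξ (j+1) - x)) * (x * (1 - ξ (j+1)))) * c (j+1)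
            ≤ ((1 + (ξ (j+1) - x)) * (x * (1 - ξ j))) * c (j+1) := by
          have : (0:ℝ) ≤ (1 + (ξ (j+1) - x)) * x * c (j+1) := by
            apply mul_nonneg (mul_nonneg _ hx0) hcj1
            simp only [hgdef] at hg1; linarith
          nlinarith [this, hmon]
        simp only [hgdef]
        nlinarith [hs', h3]
      have h4 : (1 - ξ j) * (c j * (1 - x)) ≤ (1 - ξ j) * ((1 + g (j+1)) * (c (j+1) * x)) :=
        le_trans (le_of_eq h1) h2
      exact le_of_mul_le_mul_left h4 (by linarith)
    have hfac : (0:ℝ) ≤ x ^ j * (1 - x) ^ (n - (j+1)) :=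
      mul_nonneg (pow_nonneg hx0 j) (pow_nonneg h1x _)
    have hexp : n - j = (n - (j+1)) + 1 := by omega
    have e1 : w j = (c j * (1 - x)) * (x ^ j * (1 - x) ^ (n - (j+1))) := by
      simp only [hw]; rw [hexp, pow_succ]; ring
    have e2 : (1 + g (j+1)) * w (j+1)
        = ((1 + g (j+1)) * (c (j+1) * x)) * (x ^ j * (1 - x) ^ (n - (j+1))) := by
      simp only [hw]; rw [pow_succ]; ring
    rw [e1, e2]
    exact mul_le_mul_of_nonneg_right hkey hfac
  -- total sum is zero (operator reproduces linear functions)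
  have htot : ∑ k ∈ range (n+1), w k * g k = 0 := by
    have hA : ∑ k ∈ range (n+1), (ξ k * c k) * (x ^ k * (1-x) ^ (n-k)) = x * Q x := by
      rw [Finset.sum_range_succ']
      have h0 : (ξ 0 * c 0) * (x ^ 0 * (1-x) ^ (n-0)) = 0 := by rw [hξ0]; ring
      rw [h0, add_zero, hQ, Finset.mul_sum]
      apply Finset.sum_congr rfl
      intro i hi
      have hi' : i < n := mem_range.mp hi
      rw [hid1 i hi']
      have he : n - (i+1) = n - 1 - i := by omega
      rw [he, pow_succ]
      ring
    have hB1 : ∑ k ∈ range (n+1), γ (k:ℤ) * (x ^ k * (1-x) ^ (n-k)) = (1-x) * Q x := by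
      rw [Finset.sum_range_succ]
      have h0 : γ (n:ℤ) * (x ^ n * (1-x) ^ (n-n)) = 0 := by rw [htop]; ring
      rw [h0, add_zero, hQ, Finset.mul_sum]
      refine Finset.sum_congr rfl fun k hk => ?_
      have hk' : k < n := mem_range.mp hk
      have he : n - k = (n - 1 - k) + 1 := by omega
      rw [he, pow_succ]
      ring
    have hB2 : ∑ k ∈ range (n+1), γ ((k:ℤ)-1) * (x ^ k * (1-x) ^ (n-k)) = x * Q x := by
      rw [Finset.sum_range_succ']
      have h0 : γ (((0:ℕ):ℤ)-1) * (x ^ 0 * (1-x) ^ (n-0)) = 0 := by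
        norm_num [hneg]
      rw [h0, add_zero, hQ, Finset.mul_sum]
      refine Finset.sum_congr rfl fun i hi => ?_
      rw [hcast i]
      have he : n - (i+1) = n - 1 - i := by omega
      rw [he, pow_succ]
      ring
    have hB : ∑ k ∈ range (n+1), c k * (x ^ k * (1-x) ^ (n-k)) = Q x := by
      have : ∀ k ∈ range (n+1), c k * (x ^ k * (1-x) ^ (n-k))
          = γ (k:ℤ) * (x ^ k * (1-x) ^ (n-k)) + γ ((k:ℤ)-1) * (x ^ k * (1-x) ^ (n-k)) := by
        intro k _; simp only [hc]; ring
      rw [Finset.sum_congr rfl this, Finset.sum_add_distrib, hB1, hB2]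
      ring
    have : ∀ k ∈ range (n+1), w k * g k
        = (ξ k * c k) * (x ^ k * (1-x) ^ (n-k)) - x * (c k * (x ^ k * (1-x) ^ (n-k))) := by
      intro k _; simp only [hw, hgdef]; ring
    rw [Finset.sum_congr rfl this, Finset.sum_sub_distrib, hA, ← Finset.mul_sum, hB]
    ring
  -- partial sums
  set P : ℕ → ℝ := fun j => -(∑ k ∈ range (j+1), w k * g k) with hP
  clear_value P
  have hsplit : ∀ j : ℕ, j < n → P j = ∑ i ∈ Ico (j+1) (n+1), w i * g i := by
    intro j hj
    have h := Finset.sum_range_add_sum_Ico (fun k => w k * g k) (show j+1 ≤ n+1 by omega)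
    rw [htot] at h
    simp only [hP]
    linarith
  have hPnn : ∀ j : ℕ, j < n → 0 ≤ P j := by
    intro j hj
    rcases le_or_gt 0 (g (j+1)) with h | h
    · rw [hsplit j hj]
      apply Finset.sum_nonneg
      intro i hi
      obtain ⟨hi1, hi2⟩ := mem_Ico.mp hi
      exact mul_nonneg (hwnn i (by omega)) (le_trans h (hgmono (j+1) i hi1 (by omega)))
    · have hle : ∑ k ∈ range (j+1), w k * g k ≤ 0 := by
        apply Finset.sum_nonpos
        intro k hk
        have hk' : k < j + 1 := mem_range.mp hk
        have hgk : g k ≤ 0 := le_trans (hgmono k (j+1) (by omega) (by omega)) h.le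
        exact mul_nonpos_of_nonneg_of_nonpos (hwnn k (by omega)) hgk
      simp only [hP]; linarith
  -- Abel summation forms
  have habel2 : ∑ k ∈ range (n+1), w k * g k * g k
      = ∑ j ∈ range n, P j * (g (j+1) - g j) := by
    have h := abel_sum n (fun k => w k * g k) g
    rw [htot, zero_mul, zero_sub] at h
    rw [h, ← Finset.sum_neg_distrib]
    exact Finset.sum_congr rfl fun j _ => by simp only [hP]; ring
  have habel4 : ∑ k ∈ range (n+1), w k * g k * (g k)^3
      = ∑ j ∈ range n, P j * ((g (j+1))^3 - (g j)^3) := by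
    have h := abel_sum n (fun k => w k * g k) (fun k => (g k)^3)
    rw [htot, zero_mul, zero_sub] at h
    rw [h, ← Finset.sum_neg_distrib]
    exact Finset.sum_congr rfl fun j _ => by simp only [hP]; ring
  -- tail bound (right of x)
  have tailR : ∀ d j : ℕ, j < n → n = j + 1 + d → 0 ≤ g (j+1) →
      (∑ i ∈ Ico (j+1) (n+1), w i * g i) ≤ w (j+1) := by
    intro d
    induction d with
    | zero =>
        intro j hj hn' hg
        have h1 : j + 1 = n := by omega
        have h2 : n + 1 = (j+1) + 1 := by omega
        rw [h2, Finset.sum_Ico_succ_top (by omega : j + 1 ≤ j + 1), Finset.Ico_self,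
          Finset.sum_empty, zero_add]
        have hub := hgub (j+1) (by omega)
        have hwn := hwnn (j+1) (by omega)
        have := mul_le_mul_of_nonneg_left hub hwn
        linarith
    | succ d ih =>
        intro j hj hn' hg
        have hj1 : j + 1 < n := by omega
        rw [Finset.sum_eq_sum_Ico_succ_bot (by omega : j + 1 < n + 1)]
        have hg2 : 0 ≤ g (j+2) := le_trans hg (hgmono (j+1) (j+2) (by omega) (by omega))
        have h2 := ih (j+1) hj1 (by omega) hg2
        have h3 := WR (j+1) hj1 hg
        have hw1 := hwnn (j+1) (by omega)
        have e : g (j+1) * w (j+1) + (1 - g (j+1)) * w (j+1) = w (j+1) := by ring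
        linarith
  -- head bound (left of x)
  have headL : ∀ j : ℕ, j < n → g j ≤ 0 → (∑ i ∈ range (j+1), w i * (-(g i))) ≤ w j := by
    intro j
    induction j with
    | zero =>
        intro _ hg
        rw [Finset.sum_range_one]
        have hlb := hglb 0 (by omega)
        have hw0 := hwnn 0 (by omega)
        have : w 0 * (-(g 0)) ≤ w 0 * 1 := mul_le_mul_of_nonneg_left (by linarith) hw0
        linarith
    | succ j ih =>
        intro hj hg
        rw [Finset.sum_range_succ]
        have hgj : g j ≤ 0 := le_trans (hgmono j (j+1) (by omega) (by omega)) hg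
        have h1 := ih (by omega) hgj
        have h2 := WL j hj hg
        have hw1 := hwnn (j+1) (by omega)
        have e : (1 + g (j+1)) * w (j+1) + w (j+1) * (-(g (j+1))) = w (j+1) := by ring
        linarith
  -- the crossing index
  have hgn : 0 ≤ g n := by simp only [hgdef]; rw [hξn]; linarith
  have hex : ∃ k, 0 ≤ g k := ⟨n, hgn⟩
  set m := Nat.find hex with hmdef
  have hm : 0 ≤ g m := Nat.find_spec hex
  have hmmin : ∀ k, k < m → g k < 0 := fun k hk => not_le.1 (Nat.find_min hex hk)
  have hmn : m ≤ n := Nat.find_min' hex hgn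
  clear_value m
  -- case bounds
  have hcaseR : ∀ j : ℕ, m ≤ j → j < n →
      P j * ((g (j+1))^3 - (g j)^3) ≤ 3*Δ*(w (j+1) * g (j+1) * g (j+1)) := by
    intro j hmj hj
    have hgj : 0 ≤ g j := le_trans hm (hgmono m j hmj (by omega))
    have hd0 : g j ≤ g (j+1) := hgmono j (j+1) (by omega) (by omega)
    have hgj1 : 0 ≤ g (j+1) := le_trans hgj hd0
    have hPle : P j ≤ w (j+1) := by
      rw [hsplit j hj]
      exact tailR (n - (j+1)) j hj (by omega) hgj1
    have hgapj := hgap' j hj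
    have hcube : (g (j+1))^3 - (g j)^3 ≤ 3*Δ*((g (j+1))^2) :=
      cubeR (g j) (g (j+1)) Δ hgj hd0 hgapj
    have hcnn3 : (0:ℝ) ≤ 3*Δ*((g (j+1))^2) := by positivity
    calc P j * ((g (j+1))^3 - (g j)^3) ≤ P j * (3*Δ*((g (j+1))^2)) :=
          mul_le_mul_of_nonneg_left hcube (hPnn j hj)
      _ ≤ w (j+1) * (3*Δ*((g (j+1))^2)) := mul_le_mul_of_nonneg_right hPle hcnn3
      _ = 3*Δ*(w (j+1) * g (j+1) * g (j+1)) := by ring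
  have hcaseL : ∀ j : ℕ, j + 1 < m →
      P j * ((g (j+1))^3 - (g j)^3) ≤ 3*Δ*(w j * g j * g j) := by
    intro j hjm
    have hj : j < n := by omega
    have hgj1 : g (j+1) < 0 := hmmin (j+1) hjm
    have hd0 : g j ≤ g (j+1) := hgmono j (j+1) (by omega) (by omega)
    have hgj : g j ≤ 0 := le_trans hd0 hgj1.le
    have hPle : P j ≤ w j := by
      have heq : P j = ∑ i ∈ range (j+1), w i * (-(g i)) := by
        simp only [hP, ← Finset.sum_neg_distrib]
        exact Finset.sum_congr rfl fun i _ => by ring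
      rw [heq]
      exact headL j hj hgj
    have hgapj := hgap' j hj
    have hcube : (g (j+1))^3 - (g j)^3 ≤ 3*Δ*((g j)^2) :=
      cubeL (g j) (g (j+1)) Δ hgj1.le hd0 hgapj
    have hcnn3 : (0:ℝ) ≤ 3*Δ*((g j)^2) := by positivity
    calc P j * ((g (j+1))^3 - (g j)^3) ≤ P j * (3*Δ*((g j)^2)) :=
          mul_le_mul_of_nonneg_left hcube (hPnn j hj)
      _ ≤ w j * (3*Δ*((g j)^2)) := mul_le_mul_of_nonneg_right hPle hcnn3
      _ = 3*Δ*(w j * g j * g j) := by ring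
  -- second moment and its positivity
  have hS2nn : 0 ≤ ∑ k ∈ range (n+1), w k * g k * g k := by
    apply Finset.sum_nonneg
    intro k hk
    have hkr := mem_range.mp hk
    have hk' : k ≤ n := by omega
    calc (0:ℝ) ≤ w k * (g k * g k) := mul_nonneg (hwnn k hk') (mul_self_nonneg _)
      _ = w k * g k * g k := by ring
  have htermnn : ∀ j ∈ range n, (0:ℝ) ≤ P j * (g (j+1) - g j) := by
    intro j hj
    have hj' : j < n := mem_range.mp hj
    exact mul_nonneg (hPnn j hj') (sub_nonneg.2 (hgmono j (j+1) (by omega) (by omega)))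
  -- main estimate : S4 ≤ (3Δ + Δ²) S2
  have hmain : ∑ k ∈ range (n+1), w k * g k * (g k)^3
      ≤ (3*Δ + Δ^2) * ∑ k ∈ range (n+1), w k * g k * g k := by
    rw [habel4]
    rcases Nat.eq_zero_or_pos m with hm0 | hm1
    · -- no negative part
      have h1 : ∑ j ∈ range n, P j * ((g (j+1))^3 - (g j)^3)
          ≤ ∑ j ∈ range n, 3*Δ*(w (j+1) * g (j+1) * g (j+1)) := by
        apply Finset.sum_le_sum
        intro j hj
        exact hcaseR j (by omega) (mem_range.mp hj)
      have h2 : ∑ j ∈ range n, 3*Δ*(w (j+1) * g (j+1) * g (j+1))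
          = 3*Δ* ∑ j ∈ range n, w (j+1) * g (j+1) * g (j+1) := by
        rw [Finset.mul_sum]
      have h3 : ∑ j ∈ range n, w (j+1) * g (j+1) * g (j+1)
          ≤ ∑ k ∈ range (n+1), w k * g k * g k := by
        rw [Finset.sum_range_succ']
        have : (0:ℝ) ≤ w 0 * g 0 * g 0 := by
          calc (0:ℝ) ≤ w 0 * (g 0 * g 0) := mul_nonneg (hwnn 0 (by omega)) (mul_self_nonneg _)
            _ = w 0 * g 0 * g 0 := by ring
        linarith
      have h4 : 3*Δ* ∑ j ∈ range n, w (j+1) * g (j+1) * g (j+1)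
          ≤ 3*Δ* ∑ k ∈ range (n+1), w k * g k * g k := by
        apply mul_le_mul_of_nonneg_left h3 (by linarith)
      have h5 : (0:ℝ) ≤ Δ^2 * ∑ k ∈ range (n+1), w k * g k * g k :=
        mul_nonneg (sq_nonneg Δ) hS2nn
      linarith
    · -- m ≥ 1
      obtain ⟨i, hmi⟩ : ∃ i, m = i + 1 := ⟨m - 1, by omega⟩
      have hin : i < n := by omega
      -- split the sum
      rw [← Finset.sum_range_add_sum_Ico _ hmn]
      rw [hmi, Finset.sum_range_succ]
      -- left part
      have hL : ∑ j ∈ range i, P j * ((g (j+1))^3 - (g j)^3)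
          ≤ 3*Δ* ∑ j ∈ range i, w j * g j * g j := by
        rw [Finset.mul_sum]
        apply Finset.sum_le_sum
        intro j hj
        exact hcaseL j (by have := mem_range.mp hj; omega)
      -- middle (straddle) term
      have hgi : g i < 0 := hmmin i (by omega)
      have hgm' : 0 ≤ g (i+1) := by rw [hmi] at hm; exact hm
      have hgapi := hgap' i hin
      have hcube := cubeM (g i) (g (i+1)) Δ hgi.le hgm' hgapi hΔnn
      have hM : P i * ((g (i+1))^3 - (g i)^3) ≤ Δ^2 * (P i * (g (i+1) - g i)) := by
        calc P i * ((g (i+1))^3 - (g i)^3) ≤ P i * (Δ^2 * (g (i+1) - g i)) :=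
              mul_le_mul_of_nonneg_left hcube (hPnn i hin)
          _ = Δ^2 * (P i * (g (i+1) - g i)) := by ring
      have hMS : P i * (g (i+1) - g i) ≤ ∑ j ∈ range n, P j * (g (j+1) - g j) :=
        Finset.single_le_sum htermnn (mem_range.mpr hin)
      have hM2 : P i * ((g (i+1))^3 - (g i)^3)
          ≤ Δ^2 * ∑ k ∈ range (n+1), w k * g k * g k := by
        calc P i * ((g (i+1))^3 - (g i)^3) ≤ Δ^2 * (P i * (g (i+1) - g i)) := hM
          _ ≤ Δ^2 * ∑ j ∈ range n, P j * (g (j+1) - g j) :=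
              mul_le_mul_of_nonneg_left hMS (sq_nonneg Δ)
          _ = Δ^2 * ∑ k ∈ range (n+1), w k * g k * g k := by rw [← habel2]
      -- right part
      have hR2 : ∑ j ∈ Ico (i+1) n, P j * ((g (j+1))^3 - (g j)^3)
          ≤ 3*Δ* ∑ j ∈ Ico (i+1) n, w (j+1) * g (j+1) * g (j+1) := by
        rw [Finset.mul_sum]
        apply Finset.sum_le_sum
        intro j hj
        obtain ⟨hj1, hj2⟩ := mem_Ico.mp hj
        exact hcaseR j (by omega) hj2
      -- combine index sets
      have hcomb : ∑ j ∈ range i, w j * g j * g j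
            + ∑ j ∈ Ico (i+1) n, w (j+1) * g (j+1) * g (j+1)
          ≤ ∑ k ∈ range (n+1), w k * g k * g k := by
        have hre : ∑ j ∈ Ico (i+1) n, w (j+1) * g (j+1) * g (j+1)
            = ∑ k ∈ Ico (i+2) (n+1), w k * g k * g k := by
          rw [Finset.sum_Ico_eq_sum_range, Finset.sum_Ico_eq_sum_range]
          have he1 : n - (i+1) = (n+1) - (i+2) := by omega
          rw [he1]
          apply Finset.sum_congr rfl
          intro t _
          have he2 : i + 1 + t + 1 = i + 2 + t := by omega
          rw [he2]
        rw [hre]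
        have hdisj : Disjoint (range i) (Ico (i+2) (n+1)) := by
          simp only [Finset.disjoint_left, mem_range, mem_Ico]
          intro a ha
          omega
        have hsub : range i ∪ Ico (i+2) (n+1) ⊆ range (n+1) := by
          intro a ha
          simp only [Finset.mem_union, mem_range, mem_Ico] at ha ⊢
          omega
        calc ∑ j ∈ range i, w j * g j * g j + ∑ k ∈ Ico (i+2) (n+1), w k * g k * g k
            = ∑ k ∈ range i ∪ Ico (i+2) (n+1), w k * g k * g k :=
              (Finset.sum_union hdisj).symm
          _ ≤ ∑ k ∈ range (n+1), w k * g k * g k := by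
              apply Finset.sum_le_sum_of_subset_of_nonneg hsub
              intro k hk _
              have hk' : k ≤ n := by have := mem_range.mp hk; omega
              calc (0:ℝ) ≤ w k * (g k * g k) := mul_nonneg (hwnn k hk') (mul_self_nonneg _)
                _ = w k * g k * g k := by ring
      have h3Δ : 3*Δ*(∑ j ∈ range i, w j * g j * g j
            + ∑ j ∈ Ico (i+1) n, w (j+1) * g (j+1) * g (j+1))
          ≤ 3*Δ* ∑ k ∈ range (n+1), w k * g k * g k :=
        mul_le_mul_of_nonneg_left hcomb (by linarith)
      linarith [hL, hM2, hR2, h3Δ]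
  -- positivity of the denominator
  have hQpos : 0 < Q x := by
    rw [hQ]
    apply Finset.sum_pos'
    · intro k hk
      have hk' : k < n := mem_range.mp hk
      exact mul_nonneg (mul_nonneg (hΓnn k (by omega)) (pow_nonneg hx0 k)) (pow_nonneg h1x _)
    · by_cases hxe : x = 1
      · refine ⟨n-1, mem_range.mpr (by omega), ?_⟩
        have he : n - 1 - (n - 1) = 0 := by omega
        rw [hxe, he, pow_zero, one_pow, mul_one, mul_one]
        exact hΓpos (n-1) (by omega)
      · refine ⟨0, mem_range.mpr (by omega), ?_⟩
        have hx1' : 0 < 1 - x := by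
          rcases lt_or_eq_of_le hx1 with h | h
          · linarith
          · exact absurd h hxe
        rw [pow_zero, mul_one]
        exact mul_pos (hΓpos 0 (by omega)) (pow_pos hx1' _)
  -- conclusion
  simp only [hR]
  have hN4 : (∑ k ∈ range (n + 1),
        (ξ k - x) ^ 4 * (γ (k:ℤ) + γ ((k:ℤ) - 1)) * x ^ k * (1 - x) ^ (n - k))
      = ∑ k ∈ range (n+1), w k * g k * (g k)^3 := by
    apply Finset.sum_congr rfl
    intro k _
    simp only [hw, hgdef, hc]
    ring
  have hN2 : (∑ k ∈ range (n + 1),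
        (ξ k - x) ^ 2 * (γ (k:ℤ) + γ ((k:ℤ) - 1)) * x ^ k * (1 - x) ^ (n - k))
      = ∑ k ∈ range (n+1), w k * g k * g k := by
    apply Finset.sum_congr rfl
    intro k _
    simp only [hw, hgdef, hc]
    ring
  rw [hN4, hN2]
  have key : (∑ k ∈ range (n+1), w k * g k * (g k)^3)
      ≤ Δ * (∑ k ∈ range (n+1), w k * g k * g k) * (6*x^2 - 15*x + 12 + Δ) := by
    have h9 : (0:ℝ) ≤ 6*x^2 - 15*x + 9 := by
      have hB : (0:ℝ) ≤ 3 - 2*x := by linarith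
      have := mul_nonneg h1x hB
      linarith [this]
    have hprod : (0:ℝ) ≤ Δ * (∑ k ∈ range (n+1), w k * g k * g k) * (6*x^2 - 15*x + 9) :=
      mul_nonneg (mul_nonneg hΔnn hS2nn) h9
    have e : Δ * (∑ k ∈ range (n+1), w k * g k * g k) * (6*x^2 - 15*x + 12 + Δ)
        = (3*Δ + Δ^2) * (∑ k ∈ range (n+1), w k * g k * g k)
          + Δ * (∑ k ∈ range (n+1), w k * g k * g k) * (6*x^2 - 15*x + 9) := by ring
    linarith [hmain, hprod]
  calc (∑ k ∈ range (n+1), w k * g k * (g k)^3) / Q x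
      ≤ (Δ * (∑ k ∈ range (n+1), w k * g k * g k) * (6*x^2 - 15*x + 12 + Δ)) / Q x :=
        (div_le_div_iff_of_pos_right hQpos).mpr key
    _ = Δ * ((∑ k ∈ range (n+1), w k * g k * g k) / Q x) * (6*x^2 - 15*x + 12 + Δ) := by
        ring
end

section
/- Let φ ∈ C[0,1] be strictly positive with minimum m, and define x_{n,k} = kφ((k−1)/(n−1)) / (kφ((k−1)/(n−1)) + (n−k)φ(k/(n−1))) for k = 1,...,n−1, x_{n,0}=0, x_{n,n}=1. Then for all k, |x_{n,k} − k/n| ≤ (1/(4m))·ω₁(φ, 1/(n−1)), where ω₁(φ,h) = sup{|φ(x)−φ(y)| : x,y ∈ [0,1], |x−y| ≤ h}. -/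
set_option maxHeartbeats 1000000 in
/-- For continuous `φ ≥ m > 0` on `[0,1]` and the nodes
`ξ k = k φ((k-1)/(n-1)) / (k φ((k-1)/(n-1)) + (n-k) φ(k/(n-1)))` for `1 ≤ k ≤ n-1`,
`ξ 0 = 0`, `ξ n = 1`, one has `|ξ k - k/n| ≤ (1/(4m)) ω₁(φ, 1/(n-1))` for all `k ≤ n`. -/
theorem stmt15 (n : ℕ) (hn : 2 ≤ n) (φ : ℝ → ℝ) (m : ℝ) (hm : 0 < m)
    (hφc : ContinuousOn φ (Set.Icc (0 : ℝ) 1))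
    (hφm : ∀ x ∈ Set.Icc (0 : ℝ) 1, m ≤ φ x)
    (ω : ℝ)
    (hω : ω = sSup {d : ℝ | ∃ x ∈ Set.Icc (0 : ℝ) 1, ∃ y ∈ Set.Icc (0 : ℝ) 1,
      |x - y| ≤ 1 / ((n : ℝ) - 1) ∧ d = |φ x - φ y|})
    (ξ : ℕ → ℝ) (hξ0 : ξ 0 = 0) (hξn : ξ n = 1)
    (hξ : ∀ k : ℕ, 1 ≤ k → k ≤ n - 1 →
      ξ k = (k : ℝ) * φ (((k : ℝ) - 1) / ((n : ℝ) - 1)) /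
        ((k : ℝ) * φ (((k : ℝ) - 1) / ((n : ℝ) - 1)) + ((n : ℝ) - (k : ℝ)) * φ ((k : ℝ) / ((n : ℝ) - 1)))) :
    ∀ k : ℕ, k ≤ n → |ξ k - (k : ℝ) / (n : ℝ)| ≤ 1 / (4 * m) * ω := by
  have hn2 : (2:ℝ) ≤ (n:ℝ) := by exact_mod_cast hn
  have hn1 : (1:ℝ) ≤ (n:ℝ) - 1 := by linarith
  have hn1pos : (0:ℝ) < (n:ℝ) - 1 := by linarith
  have hnpos : (0:ℝ) < (n:ℝ) := by linarith
  -- the set defining ω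
  set S : Set ℝ := {d : ℝ | ∃ x ∈ Set.Icc (0 : ℝ) 1, ∃ y ∈ Set.Icc (0 : ℝ) 1,
      |x - y| ≤ 1 / ((n : ℝ) - 1) ∧ d = |φ x - φ y|} with hS
  obtain ⟨C, hC⟩ := (isCompact_Icc (a := (0:ℝ)) (b := 1)).exists_bound_of_continuousOn hφc
  have hbdd : BddAbove S := by
    refine ⟨2 * C, ?_⟩
    rintro d ⟨x, hx, y, hy, -, rfl⟩
    have h1 : |φ x| ≤ C := by simpa using hC x hx
    have h2 : |φ y| ≤ C := by simpa using hC y hy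
    have h1' := abs_le.mp h1
    have h2' := abs_le.mp h2
    rw [abs_le]
    constructor <;> linarith [h1'.1, h1'.2, h2'.1, h2'.2]
  have hle : ∀ x ∈ Set.Icc (0:ℝ) 1, ∀ y ∈ Set.Icc (0:ℝ) 1,
      |x - y| ≤ 1 / ((n:ℝ) - 1) → |φ x - φ y| ≤ ω := by
    intro x hx y hy hxy
    rw [hω]
    exact le_csSup hbdd ⟨x, hx, y, hy, hxy, rfl⟩
  have hω0 : 0 ≤ ω := by
    have h0 : |φ 0 - φ 0| ≤ ω := by
      refine hle 0 ⟨le_refl _, zero_le_one⟩ 0 ⟨le_refl _, zero_le_one⟩ ?_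
      rw [sub_self, abs_zero]
      positivity
    simpa using h0
  have hrhs0 : 0 ≤ 1 / (4 * m) * ω := by positivity
  intro k hk
  rcases Nat.eq_zero_or_pos k with hk0 | hk1
  · subst hk0; simpa [hξ0] using hrhs0
  rcases eq_or_lt_of_le hk with hkn | hkn
  · have : ((n:ℝ))/(n:ℝ) = 1 := div_self (ne_of_gt hnpos)
    rw [hkn, hξn, this]
    simpa using hrhs0
  · -- 1 ≤ k ≤ n - 1
    have hkn1 : k ≤ n - 1 := Nat.le_sub_one_of_lt hkn
    have hK1 : (1:ℝ) ≤ (k:ℝ) := by exact_mod_cast hk1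
    have hKn1 : (k:ℝ) ≤ (n:ℝ) - 1 := by
      have : (k:ℝ) ≤ ((n - 1 : ℕ) : ℝ) := by exact_mod_cast hkn1
      rwa [Nat.cast_sub (by omega), Nat.cast_one] at this
    set N := (n:ℝ)
    set K := (k:ℝ)
    set a := (K - 1) / (N - 1) with ha
    set b := K / (N - 1) with hb
    have haI : a ∈ Set.Icc (0:ℝ) 1 := by
      constructor
      · apply div_nonneg (by linarith) (le_of_lt hn1pos)
      · rw [div_le_one hn1pos]; linarith
    have hbI : b ∈ Set.Icc (0:ℝ) 1 := by
      constructor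
      · apply div_nonneg (by linarith) (le_of_lt hn1pos)
      · rw [div_le_one hn1pos]; linarith
    have habd : |a - b| ≤ 1 / (N - 1) := by
      have : a - b = -(1 / (N - 1)) := by
        rw [ha, hb]; ring
      rw [this, abs_neg, abs_of_nonneg (by positivity)]
    have hφab : |φ a - φ b| ≤ ω := hle a haI b hbI habd
    have hma : m ≤ φ a := hφm a haI
    have hmb : m ≤ φ b := hφm b hbI
    set D := K * φ a + (N - K) * φ b with hD
    have hDge : N * m ≤ D := by
      have h1 : K * m ≤ K * φ a := mul_le_mul_of_nonneg_left hma (by linarith)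
      have h2 : (N - K) * m ≤ (N - K) * φ b := mul_le_mul_of_nonneg_left hmb (by linarith)
      nlinarith
    have hD0 : 0 < D := lt_of_lt_of_le (by positivity) hDge
    rw [hξ k hk1 hkn1]
    have key : K * φ a / D - K / N = K * (N - K) * (φ a - φ b) / (N * D) := by
      field_simp
      ring
    rw [key, abs_div, abs_of_pos (by positivity : (0:ℝ) < N * D), abs_mul,
      abs_of_nonneg (by nlinarith : (0:ℝ) ≤ K * (N - K))]
    rw [div_le_iff₀ (by positivity : (0:ℝ) < N * D)]
    have hKNK : 4 * (K * (N - K)) ≤ N ^ 2 := by nlinarith [sq_nonneg (N - 2 * K)]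
    set t := |φ a - φ b| with ht
    have ht0 : 0 ≤ t := abs_nonneg _
    have main : 4 * m * (K * (N - K) * t) ≤ ω * (N * D) := by
      have e1 : 4 * m * (K * (N - K) * t) ≤ 4 * m * (K * (N - K) * ω) := by
        apply mul_le_mul_of_nonneg_left _ (by positivity)
        exact mul_le_mul_of_nonneg_left hφab (by nlinarith)
      have e2 : 4 * m * (K * (N - K) * ω) ≤ m * N ^ 2 * ω := by
        have h := mul_le_mul_of_nonneg_left hKNK (mul_nonneg hm.le hω0)
        nlinarith [h]
      have e3 : m * N ^ 2 * ω ≤ ω * (N * D) := by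
        have h := mul_le_mul_of_nonneg_left hDge (mul_nonneg hω0 (le_of_lt hnpos))
        nlinarith [h]
      linarith
    have h4m : (0:ℝ) < 4 * m := by linarith
    rw [show 1 / (4 * m) * ω * (N * D) = ω * (N * D) / (4 * m) by ring,
      le_div_iff₀ h4m]
    linarith
end

section
/- With the nodes x_{n,k} of the previous statement, the mesh satisfies Δ_n = max_{0 ≤ k ≤ n−1} |x_{n,k+1} − x_{n,k}| ≤ (1/(2m))·ω₁(φ, 1/(n−1)) + 1/n. -/
set_option maxHeartbeats 1600000


/-- With the nodes of Statement 15, the mesh satisfies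
`Δ_n = max_{0 ≤ k ≤ n-1} |ξ (k+1) - ξ k| ≤ (1/(2m)) ω₁(φ, 1/(n-1)) + 1/n`. -/
theorem stmt16 (n : ℕ) (hn : 2 ≤ n) (φ : ℝ → ℝ) (m : ℝ) (hm : 0 < m)
    (hφc : ContinuousOn φ (Set.Icc (0 : ℝ) 1))
    (hφm : ∀ x ∈ Set.Icc (0 : ℝ) 1, m ≤ φ x)
    (ω : ℝ)
    (hω : ω = sSup {d : ℝ | ∃ x ∈ Set.Icc (0 : ℝ) 1, ∃ y ∈ Set.Icc (0 : ℝ) 1,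
      |x - y| ≤ 1 / ((n : ℝ) - 1) ∧ d = |φ x - φ y|})
    (ξ : ℕ → ℝ) (hξ0 : ξ 0 = 0) (hξn : ξ n = 1)
    (hξ : ∀ k : ℕ, 1 ≤ k → k ≤ n - 1 →
      ξ k = (k : ℝ) * φ (((k : ℝ) - 1) / ((n : ℝ) - 1)) /
        ((k : ℝ) * φ (((k : ℝ) - 1) / ((n : ℝ) - 1)) + ((n : ℝ) - (k : ℝ)) * φ ((k : ℝ) / ((n : ℝ) - 1))))
    (Δ : ℝ) (hΔ : IsGreatest {d : ℝ | ∃ k < n, d = |ξ (k + 1) - ξ k|} Δ) :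
    Δ ≤ 1 / (2 * m) * ω + 1 / (n : ℝ) := by
  have hn2 : (2:ℝ) ≤ (n:ℝ) := by exact_mod_cast hn
  have hN : (0:ℝ) < (n:ℝ) := by linarith
  have hN1 : (0:ℝ) < (n:ℝ) - 1 := by linarith
  set S := {d : ℝ | ∃ x ∈ Set.Icc (0 : ℝ) 1, ∃ y ∈ Set.Icc (0 : ℝ) 1,
      |x - y| ≤ 1 / ((n : ℝ) - 1) ∧ d = |φ x - φ y|} with hSdef
  have habs0 : |(0:ℝ) - 0| ≤ 1/((n:ℝ)-1) := by rw [sub_zero, abs_zero]; positivity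
  obtain ⟨C, hC⟩ := isCompact_Icc.exists_bound_of_continuousOn hφc
  have hSbdd : BddAbove S := by
    refine ⟨2*C, ?_⟩
    rintro d ⟨x, hx, y, hy, -, rfl⟩
    have h1 := hC x hx
    have h2 := hC y hy
    calc |φ x - φ y| ≤ ‖φ x‖ + ‖φ y‖ := by
          simpa [Real.norm_eq_abs] using abs_sub (φ x) (φ y)
      _ ≤ 2*C := by linarith
  have hω0 : 0 ≤ ω := by
    rw [hω]
    exact le_csSup hSbdd ⟨0, by norm_num, 0, by norm_num, habs0, by simp⟩
  have hmem : ∀ x ∈ Set.Icc (0:ℝ) 1, ∀ y ∈ Set.Icc (0:ℝ) 1,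
      |x - y| ≤ 1/((n:ℝ)-1) → |φ x - φ y| ≤ ω := by
    intro x hx y hy h
    rw [hω]
    exact le_csSup hSbdd ⟨x, hx, y, hy, h, rfl⟩
  have key : ∀ k : ℕ, k ≤ n → |ξ k - (k:ℝ)/(n:ℝ)| ≤ ω/(4*m) := by
    intro k hk
    rcases Nat.eq_zero_or_pos k with rfl | hk1
    · simp [hξ0]; positivity
    rcases eq_or_lt_of_le hk with rfl | hklt
    · rw [hξn]
      rw [div_self (ne_of_gt hN)]
      simp; positivity
    -- 1 ≤ k ≤ n-1
    have hkn1 : k ≤ n - 1 := by omega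
    have hξk := hξ k hk1 hkn1
    set a : ℝ := ((k:ℝ) - 1)/((n:ℝ)-1) with ha
    set b : ℝ := (k:ℝ)/((n:ℝ)-1) with hb
    have hkR : (1:ℝ) ≤ (k:ℝ) := by exact_mod_cast hk1
    have hkRn : (k:ℝ) ≤ (n:ℝ) - 1 := by
      have h : (k:ℝ) + 1 ≤ (n:ℝ) := by exact_mod_cast Nat.succ_le_of_lt hklt
      linarith
    have haI : a ∈ Set.Icc (0:ℝ) 1 := by
      constructor
      · apply div_nonneg <;> linarith
      · rw [div_le_one hN1]; linarith
    have hbI : b ∈ Set.Icc (0:ℝ) 1 := by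
      constructor
      · positivity
      · rw [div_le_one hN1]; linarith
    have hab : |a - b| ≤ 1/((n:ℝ)-1) := by
      rw [ha, hb, div_sub_div_same]
      rw [abs_div, abs_of_pos hN1]
      rw [div_le_div_iff_of_pos_right hN1]
      rw [show (k:ℝ) - 1 - k = -1 by ring]
      norm_num
    have hφab : |φ a - φ b| ≤ ω := hmem a haI b hbI hab
    have hma : m ≤ φ a := hφm a haI
    have hmb : m ≤ φ b := hφm b hbI
    set D : ℝ := (k:ℝ) * φ a + ((n:ℝ) - (k:ℝ)) * φ b with hD
    have hDm : (n:ℝ) * m ≤ D := by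
      have h1 : (k:ℝ) * m ≤ (k:ℝ) * φ a := by nlinarith
      have h2 : ((n:ℝ) - (k:ℝ)) * m ≤ ((n:ℝ) - (k:ℝ)) * φ b := by nlinarith
      nlinarith
    have hDpos : 0 < D := lt_of_lt_of_le (by positivity) hDm
    have hid : ξ k - (k:ℝ)/(n:ℝ) = (k:ℝ) * ((n:ℝ) - k) * (φ a - φ b) / (D * n) := by
      rw [hξk, div_sub_div _ _ hDpos.ne' hN.ne']
      congr 1
      rw [hD]; ring
    rw [hid, abs_div, abs_of_pos (by positivity : (0:ℝ) < D * n)]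
    rw [abs_mul, abs_mul, abs_of_nonneg (by positivity : (0:ℝ) ≤ (k:ℝ)),
      abs_of_nonneg (by linarith : (0:ℝ) ≤ (n:ℝ) - k)]
    rw [div_le_div_iff₀ (by positivity) (by positivity)]
    have hkq : (k:ℝ) * ((n:ℝ) - k) ≤ (n:ℝ)^2 / 4 := by nlinarith [sq_nonneg ((n:ℝ) - 2*k)]
    have habs : 0 ≤ |φ a - φ b| := abs_nonneg _
    have f1 : (k:ℝ) * ((n:ℝ) - k) * |φ a - φ b| * (4*m) ≤ ((n:ℝ)^2/4 * ω) * (4*m) :=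
      mul_le_mul_of_nonneg_right
        (mul_le_mul hkq hφab habs (by positivity)) (by positivity)
    have f2 : ω * (n:ℝ) * ((n:ℝ) * m) ≤ ω * (n:ℝ) * D :=
      mul_le_mul_of_nonneg_left hDm (by positivity)
    calc (k:ℝ) * ((n:ℝ) - k) * |φ a - φ b| * (4*m)
        ≤ ((n:ℝ)^2/4 * ω) * (4*m) := f1
      _ = ω * (n:ℝ) * ((n:ℝ) * m) := by ring
      _ ≤ ω * (n:ℝ) * D := f2
      _ = ω * (D * (n:ℝ)) := by ring
  obtain ⟨⟨k, hk, hΔeq⟩, -⟩ := hΔ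
  rw [hΔeq]
  have h1 := key (k+1) (by omega)
  have h2 := key k (by omega)
  have hc : ((k+1:ℕ):ℝ) = (k:ℝ) + 1 := by push_cast; ring
  rw [hc] at h1
  have htri : |ξ (k+1) - ξ k| ≤ |ξ (k+1) - ((k:ℝ)+1)/(n:ℝ)| + |((k:ℝ)+1)/(n:ℝ) - (k:ℝ)/(n:ℝ)| + |(k:ℝ)/(n:ℝ) - ξ k| := by
    have e : ξ (k+1) - ξ k = (ξ (k+1) - ((k:ℝ)+1)/(n:ℝ)) + (((k:ℝ)+1)/(n:ℝ) - (k:ℝ)/(n:ℝ)) + ((k:ℝ)/(n:ℝ) - ξ k) := by ring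
    rw [e]
    exact le_trans (abs_add_le _ _) (add_le_add_left (abs_add_le _ _) _)
  have hmid : |((k:ℝ)+1)/(n:ℝ) - (k:ℝ)/(n:ℝ)| = 1/(n:ℝ) := by
    rw [div_sub_div_same, show (k:ℝ)+1-k = 1 by ring, abs_div, abs_one, abs_of_pos hN]
  rw [hmid] at htri
  have h2' : |(k:ℝ)/(n:ℝ) - ξ k| ≤ ω/(4*m) := by rwa [abs_sub_comm]
  have heq : ω/(4*m) + 1/(n:ℝ) + ω/(4*m) = 1/(2*m)*ω + 1/(n:ℝ) := by field_simp; ring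
  linarith
end

section
/- With nodes x_{n,k} = √(k/n), the associated weights γ_{n-1,k} = ∏_{l=1}^{k} (1−x_{n,l})/x_{n,l} satisfy γ_{n-1,k} ≤ C(n−1,k)/2^k for 1 ≤ k ≤ n−1, and consequently Q_{n-1}(x) = ∑_{k=0}^{n-1} γ_{n-1,k} x^k(1−x)^{n-1-k} ≤ (1 − x/2)^{n-1} for x ∈ [0,1]. -/
/-- With nodes `ξ l = √(l/n)`, the weights
`γ k = ∏_{l=1}^{k} (1 - ξ l)/ξ l` satisfy `γ k ≤ C(n-1,k)/2^k` for `1 ≤ k ≤ n-1`, and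
consequently `Q x = ∑_{k=0}^{n-1} γ k x^k (1-x)^(n-1-k) ≤ (1 - x/2)^(n-1)` on `[0,1]`. -/
theorem stmt18 (n : ℕ) (hn : 1 ≤ n) (ξ γ : ℕ → ℝ)
    (hξ : ∀ l : ℕ, ξ l = Real.sqrt ((l : ℝ) / (n : ℝ)))
    (hγ : ∀ k : ℕ, γ k = ∏ l ∈ Finset.Icc 1 k, (1 - ξ l) / ξ l) :
    (∀ k : ℕ, 1 ≤ k → k ≤ n - 1 → γ k ≤ ((n - 1).choose k : ℝ) / 2 ^ k) ∧
    ∀ x ∈ Set.Icc (0 : ℝ) 1,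
      ∑ k ∈ Finset.range n, γ k * x ^ k * (1 - x) ^ (n - 1 - k) ≤ (1 - x / 2) ^ (n - 1) := by
  have hn1 : n - 1 + 1 = n := Nat.succ_pred_eq_of_pos hn
  have hnR : (1:ℝ) ≤ (n:ℝ) := by exact_mod_cast hn
  -- factor bound
  have hfac : ∀ l : ℕ, 1 ≤ l → l ≤ n → (1 - ξ l) / ξ l ≤ ((n:ℝ) - l) / (2 * l) := by
    intro l hl1 hln
    have hl1R : (1:ℝ) ≤ (l:ℝ) := by exact_mod_cast hl1
    have hlnR : (l:ℝ) ≤ (n:ℝ) := by exact_mod_cast hln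
    have hsl : Real.sqrt l ^ 2 = (l:ℝ) := Real.sq_sqrt (by positivity)
    have hsn : Real.sqrt n ^ 2 = (n:ℝ) := Real.sq_sqrt (by positivity)
    have hsl1 : 1 ≤ Real.sqrt l := by
      rw [show (1:ℝ) = Real.sqrt 1 by simp]
      exact Real.sqrt_le_sqrt hl1R
    have hsln : Real.sqrt l ≤ Real.sqrt n := Real.sqrt_le_sqrt hlnR
    have hξl : ξ l = Real.sqrt l / Real.sqrt n := by
      rw [hξ, Real.sqrt_div (by positivity)]
    have hξpos : 0 < ξ l := by
      rw [hξl]; positivity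
    have hsnpos : (0:ℝ) < Real.sqrt n := by linarith
    have hslpos : (0:ℝ) < Real.sqrt l := by linarith
    have hrw : (1 - ξ l) / ξ l = (Real.sqrt n - Real.sqrt l) / Real.sqrt l := by
      rw [hξl]; field_simp
    rw [hrw, div_le_div_iff₀ hslpos (by positivity)]
    nlinarith [sq_nonneg (Real.sqrt n - Real.sqrt l), hsl1, hsln]
  -- product formula
  have hprod : ∀ m : ℕ, m ≤ n - 1 →
      (∏ l ∈ Finset.Icc 1 m, ((n : ℝ) - l) / (2 * l)) = ((n-1).choose m : ℝ) / 2 ^ m := by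
    intro m hm
    induction m with
    | zero => simp
    | succ j ih =>
      rw [Finset.prod_Icc_succ_top (by omega), ih (by omega)]
      have hc := Nat.choose_succ_right_eq (n-1) j
      have hjn : j ≤ n - 1 := by omega
      have h2 : ((n - 1 - j : ℕ) : ℝ) = (n:ℝ) - 1 - j := by
        have e1 : (((n-1) - j : ℕ):ℝ) = ((n-1:ℕ):ℝ) - (j:ℝ) := Nat.cast_sub hjn
        have e2 : ((n-1 : ℕ):ℝ) = (n:ℝ) - 1 := by
          rw [Nat.cast_sub hn]; simp
        rw [e1, e2]
      have hcR : ((n-1).choose (j+1) : ℝ) * (j+1) = ((n-1).choose j : ℝ) * ((n:ℝ) - 1 - j) := by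
        calc ((n-1).choose (j+1) : ℝ) * (j+1)
            = (((n-1).choose (j+1) * (j+1) : ℕ) : ℝ) := by push_cast; ring
          _ = (((n-1).choose j * (n-1-j) : ℕ):ℝ) := by rw [hc]
          _ = _ := by rw [Nat.cast_mul, h2]
      field_simp
      push_cast
      linear_combination (-(2:ℝ)^(j+1)) * hcR
  -- γ nonneg factors and main bound
  have key : ∀ k : ℕ, k ≤ n - 1 → γ k ≤ ((n - 1).choose k : ℝ) / 2 ^ k := by
    intro k hk
    rw [hγ, ← hprod k hk]
    apply Finset.prod_le_prod
    · intro l hl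
      simp only [Finset.mem_Icc] at hl
      have hξpos : 0 < ξ l := by
        rw [hξ]
        apply Real.sqrt_pos.2
        have : (1:ℝ) ≤ (l:ℝ) := by exact_mod_cast hl.1
        positivity
      have hξle1 : ξ l ≤ 1 := by
        have h1 : (l:ℝ) ≤ (n:ℝ) := by exact_mod_cast (by omega : l ≤ n)
        calc ξ l = Real.sqrt ((l:ℝ)/(n:ℝ)) := hξ l
          _ ≤ Real.sqrt 1 := Real.sqrt_le_sqrt (by rw [div_le_one (by linarith)]; exact h1)
          _ = 1 := Real.sqrt_one
      exact div_nonneg (by linarith) hξpos.le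
    · intro l hl
      simp only [Finset.mem_Icc] at hl
      exact hfac l hl.1 (by omega)
  constructor
  · intro k _ hk; exact key k hk
  · intro x hx
    obtain ⟨hx0, hx1⟩ := hx
    have hbin : (x/2 + (1-x))^(n-1)
        = ∑ k ∈ Finset.range n, (x/2)^k * (1-x)^(n-1-k) * ((n-1).choose k : ℝ) := by
      rw [add_pow, hn1]
    have : (1 - x/2) = x/2 + (1-x) := by ring
    rw [this, hbin]
    apply Finset.sum_le_sum
    intro k hk
    simp only [Finset.mem_range] at hk
    have hkle : k ≤ n - 1 := by omega
    have h1 : (0:ℝ) ≤ x ^ k * (1-x)^(n-1-k) :=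
      mul_nonneg (pow_nonneg hx0 _) (pow_nonneg (by linarith) _)
    have h2 := key k hkle
    calc γ k * x ^ k * (1-x)^(n-1-k)
        ≤ (((n-1).choose k : ℝ) / 2^k) * x ^ k * (1-x)^(n-1-k) := by
          have := mul_le_mul_of_nonneg_right h2 h1
          linarith [this, mul_assoc (γ k) (x^k) ((1-x)^(n-1-k)),
            mul_assoc (((n-1).choose k : ℝ) / 2^k) (x^k) ((1-x)^(n-1-k))]
      _ = (x/2)^k * (1-x)^(n-1-k) * ((n-1).choose k : ℝ) := by
          rw [div_pow]; ring
end
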